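/- arXiv:1411.5035 — 2 statements merged into one kernel-verified Lean document; each statement's English description precedes it below -/
import Mathlib

section
/- Pointwise stabilizers of clones are copies of Thompson's group V (Proposition 5.2): let C be a Cantor algebra free on one generator and let X be a clone of C. Then the pointwise stabilizer subgroup V(X) = {v ∈ Aut(C) | ∀ x ∈ X, v x = x} is isomorphic as a group to Aut(C) (there exists a group isomorphism V(X) ≃* Aut(C)). -/
open CategoryTheory


/-- A Cantor algebra: a type with a bijection `μ : X × X ≃ X`. -/
structure CantorStr (X : Type) where
  mu : X × X ≃ X

/-- A homomorphism of Cantor algebras: a map commuting with the multiplications. -/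
def IsCantorHom {C X : Type} (hC : CantorStr C) (hX : CantorStr X) (f : C → X) : Prop :=
  ∀ x y : C, f (hC.mu (x, y)) = hX.mu (f x, f y)

/-- `C` is the free Cantor algebra on the generators `b : Fin r → C`. -/
def IsFreeCantorOn {C : Type} (hC : CantorStr C) {r : ℕ} (b : Fin r → C) : Prop :=
  ∀ (X : Type) (hX : CantorStr X) (x : Fin r → X),
    ∃! f : C → X, IsCantorHom hC hX f ∧ ∀ i, f (b i) = x i

/-- The automorphism group of a Cantor algebra, as a subgroup of the permutation group. -/
def cantorAut {C : Type} (hC : CantorStr C) : Subgroup (Equiv.Perm C) where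
  carrier := {f : Equiv.Perm C | IsCantorHom hC hC f}
  one_mem' := fun _ _ => rfl
  mul_mem' := by
    intro a b ha hb x y
    simp only [Equiv.Perm.coe_mul, Function.comp_apply, hb x y, ha (b x) (b y)]
  inv_mem' := by
    intro a ha x y
    apply a.injective
    rw [Equiv.Perm.coe_inv, Equiv.apply_symm_apply, ha, Equiv.apply_symm_apply, Equiv.apply_symm_apply]

/-- The pointwise stabilizer `V(X)` of a subset `X ⊆ C` in the automorphism group. -/
def fixCantor {C : Type} (hC : CantorStr C) (X : Set C) : Subgroup (cantorAut hC) where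
  carrier := {v | ∀ x ∈ X, (v : Equiv.Perm C) x = x}
  one_mem' := fun _ _ => rfl
  mul_mem' := by
    intro a b ha hb x hx
    simp only [Subgroup.coe_mul, Equiv.Perm.coe_mul, Function.comp_apply, hb x hx, ha x hx]
  inv_mem' := by
    intro a ha x hx
    replace ha := ha x hx
    show ((a : Equiv.Perm C)⁻¹ : Equiv.Perm C) x = x
    apply (a : Equiv.Perm C).injective
    rw [Equiv.Perm.coe_inv, Equiv.apply_symm_apply, ha]

/-- A subalgebra: a subset closed under `μ`, `λ` and `ρ`. -/
def IsCantorSubalgebra {C : Type} (hC : CantorStr C) (S : Set C) : Prop :=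
  (∀ x ∈ S, ∀ y ∈ S, hC.mu (x, y) ∈ S) ∧
    ∀ x ∈ S, (hC.mu.symm x).1 ∈ S ∧ (hC.mu.symm x).2 ∈ S

/-- The subalgebra generated by a subset: the smallest subalgebra containing it. -/
def genCantorSubalgebra {C : Type} (hC : CantorStr C) (A : Set C) : Set C :=
  ⋂₀ {S : Set C | IsCantorSubalgebra hC S ∧ A ⊆ S}

/-- A clone: a nonempty, proper, finitely generated subalgebra. -/
def IsClone {C : Type} (hC : CantorStr C) (X : Set C) : Prop :=
  IsCantorSubalgebra hC X ∧ X.Nonempty ∧ X ≠ Set.univ ∧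
    ∃ F : Set C, F.Finite ∧ X = genCantorSubalgebra hC F


namespace CantorV

/-- Infinite binary sequences (Cantor space). -/
abbrev K := ℕ → Bool

def kcons (b : Bool) (x : K) : K := fun n => match n with
  | 0 => b
  | n+1 => x n

def ktail (x : K) : K := fun n => x (n+1)

@[simp] lemma kcons_zero (b : Bool) (x : K) : kcons b x 0 = b := rfl
@[simp] lemma kcons_succ (b : Bool) (x : K) (n : ℕ) : kcons b x (n+1) = x n := rfl
@[simp] lemma ktail_kcons (b : Bool) (x : K) : ktail (kcons b x) = x := rfl

lemma kcons_head_tail (x : K) : kcons (x 0) (ktail x) = x := by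
  funext n; cases n <;> rfl

/-- Prepend a finite word to an infinite sequence. -/
def pre : List Bool → K → K
  | [], x => x
  | b :: t, x => kcons b (pre t x)

@[simp] lemma pre_nil (x : K) : pre [] x = x := rfl
@[simp] lemma pre_cons (b : Bool) (t : List Bool) (x : K) :
    pre (b :: t) x = kcons b (pre t x) := rfl

lemma pre_append (u v : List Bool) (x : K) : pre (u ++ v) x = pre u (pre v x) := by
  induction u with
  | nil => rfl
  | cons b t ih => simp [pre, ih]

lemma pre_concat (w : List Bool) (c : Bool) (z : K) :
    pre (w ++ [c]) z = pre w (kcons c z) := by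
  rw [pre_append]; rfl

def ktake : ℕ → K → List Bool
  | 0, _ => []
  | n+1, x => x 0 :: ktake n (ktail x)

def kdrop : ℕ → K → K
  | 0, x => x
  | n+1, x => kdrop n (ktail x)

@[simp] lemma ktake_length (n : ℕ) (x : K) : (ktake n x).length = n := by
  induction n generalizing x with
  | zero => rfl
  | succ n ih => simp [ktake, ih]

lemma pre_ktake_kdrop (n : ℕ) (x : K) : pre (ktake n x) (kdrop n x) = x := by
  induction n generalizing x with
  | zero => rfl
  | succ n ih =>
    show kcons (x 0) (pre (ktake n (ktail x)) (kdrop n (ktail x))) = x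
    rw [ih]; exact kcons_head_tail x

lemma ktake_pre_le {w : List Bool} {j : ℕ} (h : j ≤ w.length) (z : K) :
    ktake j (pre w z) = w.take j := by
  induction w generalizing j with
  | nil =>
    have : j = 0 := Nat.le_zero.mp h
    subst this; rfl
  | cons b t ih =>
    cases j with
    | zero => rfl
    | succ j =>
      show (kcons b (pre t z)) 0 :: ktake j (ktail (kcons b (pre t z))) = _
      simp at h
      simp [ih h]

lemma ktake_pre {w : List Bool} {n : ℕ} (h : w.length = n) (z : K) :
    ktake n (pre w z) = w := by
  subst h; rw [ktake_pre_le le_rfl]; simp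

lemma kdrop_pre_le {w : List Bool} {j : ℕ} (h : j ≤ w.length) (z : K) :
    kdrop j (pre w z) = pre (w.drop j) z := by
  induction w generalizing j with
  | nil =>
    have : j = 0 := Nat.le_zero.mp h
    subst this; rfl
  | cons b t ih =>
    cases j with
    | zero => rfl
    | succ j =>
      show kdrop j (ktail (kcons b (pre t z))) = _
      simp at h
      simp [ih h]

lemma kdrop_pre {w : List Bool} {n : ℕ} (h : w.length = n) (z : K) :
    kdrop n (pre w z) = z := by
  subst h; rw [kdrop_pre_le le_rfl]; simp

lemma ktake_pre_ge {w : List Bool} {n : ℕ} (h : w.length ≤ n) (z : K) :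
    ktake n (pre w z) = w ++ ktake (n - w.length) z := by
  induction w generalizing n with
  | nil => simp
  | cons b t ih =>
    cases n with
    | zero => simp at h
    | succ n =>
      show (kcons b (pre t z)) 0 :: ktake n (ktail (kcons b (pre t z))) = _
      simp at h
      simp [ih h]

/-- Two words that prepend equally (for all tails) are equal. -/
lemma pre_inj {u v : List Bool} (h : ∀ z, pre u z = pre v z) : u = v := by
  induction u generalizing v with
  | nil =>
    cases v with
    | nil => rfl
    | cons b t =>
      exfalso
      have h1 := congrFun (h (fun _ => !b)) 0
      simp [pre] at h1
  | cons a s ih =>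
    cases v with
    | nil =>
      exfalso
      have h1 := congrFun (h (fun _ => !a)) 0
      simp [pre] at h1
    | cons b t =>
      have h0 := congrFun (h (fun _ => false)) 0
      simp [pre] at h0
      subst h0
      have : ∀ z, pre s z = pre t z := by
        intro z
        have := h z
        simpa [pre, kcons] using congrArg ktail this
      rw [ih this]

end CantorV
namespace CantorV

def join (e f : K → K) : K → K := fun x => cond (x 0) (f (ktail x)) (e (ktail x))

def lam (f : K → K) : K → K := fun y => f (kcons false y)
def rho (f : K → K) : K → K := fun y => f (kcons true y)

lemma join_lam_rho (f : K → K) : join (lam f) (rho f) = f := by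
  funext x
  show cond (x 0) (f (kcons true (ktail x))) (f (kcons false (ktail x))) = f x
  cases hx : x 0 <;> simp only [cond] <;> rw [← hx, kcons_head_tail]

@[simp] lemma lam_join (e f : K → K) : lam (join e f) = e := by
  funext y; simp [lam, join]

@[simp] lemma rho_join (e f : K → K) : rho (join e f) = f := by
  funext y; simp [rho, join]

lemma join_apply_pre (e f : K → K) (c : Bool) (z : K) :
    join e f (kcons c z) = cond c (f z) (e z) := by
  cases c <;> simp [join]

/-- `f` is a prefix-replacement map of depth `n`. -/
def IsPR (n : ℕ) (f : K → K) : Prop :=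
  ∃ L : List Bool → List Bool, ∀ w : List Bool, w.length = n → ∀ z, f (pre w z) = pre (L w) z

def Mpred (f : K → K) : Prop := ∃ n, IsPR n f

lemma isPR_pre (w : List Bool) : IsPR w.length (pre w) := by
  refine ⟨fun w' => w ++ w', fun w' hw' z => ?_⟩
  rw [pre_append]

lemma isPR_id : IsPR 0 id := ⟨fun _ => [], by intro w hw z; simp [List.length_eq_zero_iff.mp hw]⟩

lemma isPR_add (m : ℕ) {n : ℕ} {f : K → K} (h : IsPR n f) : IsPR (n + m) f := by
  obtain ⟨L, hL⟩ := h
  refine ⟨fun w => L (w.take n) ++ w.drop n, fun w hw z => ?_⟩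
  have h1 : w = w.take n ++ w.drop n := (List.take_append_drop n w).symm
  have h2 : (w.take n).length = n := by
    rw [List.length_take, hw]; omega
  calc f (pre w z) = f (pre (w.take n) (pre (w.drop n) z)) := by
        conv_lhs => rw [h1, pre_append]
    _ = pre (L (w.take n)) (pre (w.drop n) z) := hL _ h2 _
    _ = pre (L (w.take n) ++ w.drop n) z := by rw [pre_append]

lemma isPR_mono {n m : ℕ} {f : K → K} (h : n ≤ m) (hf : IsPR n f) : IsPR m f := by
  obtain ⟨k, rfl⟩ := Nat.le.dest h
  exact isPR_add k hf

lemma isPR_join {n : ℕ} {e f : K → K} (he : IsPR n e) (hf : IsPR n f) :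
    IsPR (n + 1) (join e f) := by
  obtain ⟨Le, hLe⟩ := he
  obtain ⟨Lf, hLf⟩ := hf
  refine ⟨fun w => match w with
    | [] => []
    | b :: t => cond b (Lf t) (Le t), fun w hw z => ?_⟩
  match w with
  | b :: t =>
    simp only [List.length_cons, Nat.add_right_cancel_iff] at hw
    show join e f (kcons b (pre t z)) = _
    rw [join_apply_pre]
    cases b
    · exact hLe t hw z
    · exact hLf t hw z

lemma isPR_lam {n : ℕ} {f : K → K} (hf : IsPR (n + 1) f) : IsPR n (lam f) := by
  obtain ⟨L, hL⟩ := hf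
  refine ⟨fun w => L (false :: w), fun w hw z => ?_⟩
  show f (kcons false (pre w z)) = _
  exact hL (false :: w) (by simp [hw]) z

lemma isPR_rho {n : ℕ} {f : K → K} (hf : IsPR (n + 1) f) : IsPR n (rho f) := by
  obtain ⟨L, hL⟩ := hf
  refine ⟨fun w => L (true :: w), fun w hw z => ?_⟩
  show f (kcons true (pre w z)) = _
  exact hL (true :: w) (by simp [hw]) z

lemma mpred_join {e f : K → K} (he : Mpred e) (hf : Mpred f) : Mpred (join e f) := by
  obtain ⟨n, hn⟩ := he; obtain ⟨m, hm⟩ := hf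
  exact ⟨max n m + 1, isPR_join (isPR_mono (le_max_left _ _) hn) (isPR_mono (le_max_right _ _) hm)⟩

lemma mpred_lam {f : K → K} (hf : Mpred f) : Mpred (lam f) := by
  obtain ⟨n, hn⟩ := hf
  exact ⟨n, isPR_lam (isPR_mono (Nat.le_succ n) hn)⟩

lemma mpred_rho {f : K → K} (hf : Mpred f) : Mpred (rho f) := by
  obtain ⟨n, hn⟩ := hf
  exact ⟨n, isPR_rho (isPR_mono (Nat.le_succ n) hn)⟩

lemma mpred_pre (w : List Bool) : Mpred (pre w) := ⟨_, isPR_pre w⟩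

lemma mpred_id : Mpred id := ⟨0, isPR_id⟩

/-- The free Cantor algebra on one generator: prefix-replacement maps of Cantor space. -/
def M : Type := {f : K → K // Mpred f}

def hM : CantorStr M where
  mu := { toFun := fun p => ⟨join p.1.1 p.2.1, mpred_join p.1.2 p.2.2⟩
          invFun := fun f => (⟨lam f.1, mpred_lam f.2⟩, ⟨rho f.1, mpred_rho f.2⟩)
          left_inv := by
            rintro ⟨⟨e, he⟩, ⟨f, hf⟩⟩
            simp only [Prod.mk.injEq, Subtype.mk.injEq]
            exact Prod.ext (Subtype.ext (lam_join e f)) (Subtype.ext (rho_join e f))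
          right_inv := by
            rintro ⟨f, hf⟩
            exact Subtype.ext (join_lam_rho f) }

@[simp] lemma hM_mu_apply (e f : M) : (hM.mu (e, f)).1 = join e.1 f.1 := rfl
@[simp] lemma hM_symm_fst (f : M) : ((hM.mu.symm f).1).1 = lam f.1 := rfl
@[simp] lemma hM_symm_snd (f : M) : ((hM.mu.symm f).2).1 = rho f.1 := rfl

def idM : M := ⟨id, mpred_id⟩
def preM (w : List Bool) : M := ⟨pre w, mpred_pre w⟩

end CantorV
namespace CantorV

variable {X : Type} (hX : CantorStr X)

def lamX (x : X) : X := (hX.mu.symm x).1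
def rhoX (x : X) : X := (hX.mu.symm x).2

lemma mu_lamX_rhoX (x : X) : hX.mu (lamX hX x, rhoX hX x) = x := by
  have : (lamX hX x, rhoX hX x) = hX.mu.symm x := rfl
  rw [this, Equiv.apply_symm_apply]

/-- Apply the word `w` (read left to right, letters innermost first) to `x`. -/
def act : List Bool → X → X
  | [], x => x
  | b :: t, x => act t (cond b (rhoX hX x) (lamX hX x))

lemma act_append (u v : List Bool) (x : X) : act hX (u ++ v) x = act hX v (act hX u x) := by
  induction u generalizing x with
  | nil => rfl
  | cons b t ih => simp [act, ih]

lemma act_concat (u : List Bool) (c : Bool) (x : X) :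
    act hX (u ++ [c]) x = cond c (rhoX hX (act hX u x)) (lamX hX (act hX u x)) := by
  rw [act_append]; rfl

/-- Evaluate a binary tree of depth `n` with leaves given by `g`. -/
def evalT : (n : ℕ) → (List Bool → X) → X
  | 0, g => g []
  | n+1, g => hX.mu (evalT n (fun w => g (false :: w)), evalT n (fun w => g (true :: w)))

lemma evalT_congr : ∀ (n : ℕ) (g g' : List Bool → X),
    (∀ w, w.length = n → g w = g' w) → evalT hX n g = evalT hX n g'
  | 0, g, g', h => h [] rfl
  | n+1, g, g', h => by
    show hX.mu _ = hX.mu _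
    congr 1
    refine Prod.ext ?_ ?_ <;> dsimp <;>
      [exact evalT_congr n _ _ fun w hw => h _ (by simp [hw]);
       exact evalT_congr n _ _ fun w hw => h _ (by simp [hw])]

def evalact (x0 : X) (n : ℕ) (L : List Bool → List Bool) : X :=
  evalT hX n (fun w => act hX (L w) x0)

lemma evalT_act_const (x0 : X) : ∀ (m : ℕ) (u : List Bool),
    evalT hX m (fun w => act hX (u ++ w) x0) = act hX u x0
  | 0, u => by simp [evalT]
  | m+1, u => by
    show hX.mu (evalT hX m _, evalT hX m _) = _
    have h1 : evalT hX m (fun w => act hX (u ++ (false :: w)) x0) = lamX hX (act hX u x0) :=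
      calc evalT hX m (fun w => act hX (u ++ (false :: w)) x0)
          = evalT hX m (fun w => act hX ((u ++ [false]) ++ w) x0) :=
            evalT_congr hX m _ _ (fun w hw => by rw [List.append_assoc]; rfl)
        _ = act hX (u ++ [false]) x0 := evalT_act_const x0 m (u ++ [false])
        _ = lamX hX (act hX u x0) := by rw [act_concat]; rfl
    have h2 : evalT hX m (fun w => act hX (u ++ (true :: w)) x0) = rhoX hX (act hX u x0) :=
      calc evalT hX m (fun w => act hX (u ++ (true :: w)) x0)
          = evalT hX m (fun w => act hX ((u ++ [true]) ++ w) x0) :=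
            evalT_congr hX m _ _ (fun w hw => by rw [List.append_assoc]; rfl)
        _ = act hX (u ++ [true]) x0 := evalT_act_const x0 m (u ++ [true])
        _ = rhoX hX (act hX u x0) := by rw [act_concat]; rfl
    dsimp only
    rw [h1, h2, mu_lamX_rhoX]

lemma evalact_ext (x0 : X) : ∀ (n m : ℕ) (L : List Bool → List Bool),
    evalact hX x0 (n + m) (fun w => L (w.take n) ++ w.drop n) = evalact hX x0 n L := by
  intro n
  induction n with
  | zero =>
    intro m L
    unfold evalact
    rw [Nat.zero_add]
    calc evalT hX m (fun w => act hX (L (w.take 0) ++ w.drop 0) x0)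
        = evalT hX m (fun w => act hX (L [] ++ w) x0) :=
          evalT_congr hX m _ _ (fun w hw => by simp)
      _ = act hX (L []) x0 := evalT_act_const hX x0 m (L [])
      _ = evalT hX 0 (fun w => act hX (L w) x0) := rfl
  | succ n ih =>
    intro m L
    unfold evalact
    have harith : n + 1 + m = (n + m) + 1 := by omega
    rw [harith]
    show hX.mu _ = hX.mu _
    congr 1
    refine Prod.ext ?_ ?_ <;> dsimp only
    · have ih' := ih m (fun w => L (false :: w))
      unfold evalact at ih'
      calc evalT hX (n + m) (fun w => act hX (L ((false :: w).take (n+1)) ++ (false :: w).drop (n+1)) x0)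
          = evalT hX (n + m) (fun w => act hX (L (false :: w.take n) ++ w.drop n) x0) :=
            evalT_congr hX _ _ _ (fun w hw => by rw [List.take_succ_cons, List.drop_succ_cons])
        _ = evalT hX n (fun w => act hX (L (false :: w)) x0) := ih'
    · have ih' := ih m (fun w => L (true :: w))
      unfold evalact at ih'
      calc evalT hX (n + m) (fun w => act hX (L ((true :: w).take (n+1)) ++ (true :: w).drop (n+1)) x0)
          = evalT hX (n + m) (fun w => act hX (L (true :: w.take n) ++ w.drop n) x0) :=
            evalT_congr hX _ _ _ (fun w hw => by rw [List.take_succ_cons, List.drop_succ_cons])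
        _ = evalT hX n (fun w => act hX (L (true :: w)) x0) := ih'

def ValidPR (n : ℕ) (L : List Bool → List Bool) (f : K → K) : Prop :=
  ∀ w : List Bool, w.length = n → ∀ z, f (pre w z) = pre (L w) z

lemma validPR_ext {n : ℕ} {L : List Bool → List Bool} {f : K → K} (h : ValidPR n L f) (m : ℕ) :
    ValidPR (n + m) (fun w => L (w.take n) ++ w.drop n) f := by
  intro w hw z
  have h1 : w = w.take n ++ w.drop n := (List.take_append_drop n w).symm
  have h2 : (w.take n).length = n := by rw [List.length_take, hw]; omega
  calc f (pre w z) = f (pre (w.take n) (pre (w.drop n) z)) := by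
        conv_lhs => rw [h1, pre_append]
    _ = pre (L (w.take n)) (pre (w.drop n) z) := h _ h2 _
    _ = pre (L (w.take n) ++ w.drop n) z := by rw [pre_append]

lemma validPR_unique {n : ℕ} {L L' : List Bool → List Bool} {f : K → K}
    (h : ValidPR n L f) (h' : ValidPR n L' f) : ∀ w, w.length = n → L w = L' w := by
  intro w hw
  apply pre_inj
  intro z
  rw [← h w hw z, ← h' w hw z]

/-- Well-definedness: the evaluation is independent of the chosen PR presentation. -/
lemma evalact_eq (x0 : X) {n n' : ℕ} {L L' : List Bool → List Bool} {f : K → K}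
    (h : ValidPR n L f) (h' : ValidPR n' L' f) :
    evalact hX x0 n L = evalact hX x0 n' L' := by
  have e1 := evalact_ext hX x0 n (n' - n + n - n) L
  have e2 := evalact_ext hX x0 n' (n' - n + n - n') L'
  have v1 := validPR_ext h (n' - n + n - n)
  have v2 := validPR_ext h' (n' - n + n - n')
  have harith1 : n + (n' - n + n - n) = n' - n + n := by omega
  have harith2 : n' + (n' - n + n - n') = n' - n + n := by omega
  rw [harith1] at e1 v1
  rw [harith2] at e2 v2
  rw [← e1, ← e2]
  apply evalT_congr
  intro w hw
  have := validPR_unique v1 v2 w hw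
  dsimp only at this ⊢
  rw [this]

end CantorV
namespace CantorV

variable {X : Type} (hX : CantorStr X)

lemma hom_lam {C : Type} (hC : CantorStr C) {g : C → X} (hg : IsCantorHom hC hX g) (x : C) :
    g ((hC.mu.symm x).1) = lamX hX (g x) ∧ g ((hC.mu.symm x).2) = rhoX hX (g x) := by
  have h := hg (hC.mu.symm x).1 (hC.mu.symm x).2
  rw [Prod.mk.eta, Equiv.apply_symm_apply] at h
  have h2 : hX.mu.symm (g x) = (g (hC.mu.symm x).1, g (hC.mu.symm x).2) := by
    rw [h, Equiv.symm_apply_apply]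
  constructor
  · show _ = (hX.mu.symm (g x)).1
    rw [h2]
  · show _ = (hX.mu.symm (g x)).2
    rw [h2]

lemma isPR_iff_valid (n : ℕ) (f : K → K) : IsPR n f ↔ ∃ L, ValidPR n L f := Iff.rfl

noncomputable def Fhom (x0 : X) (f : M) : X :=
  evalact hX x0 f.2.choose f.2.choose_spec.choose

lemma Fhom_valid (x0 : X) (f : M) {n : ℕ} {L : List Bool → List Bool}
    (h : ValidPR n L f.1) : Fhom hX x0 f = evalact hX x0 n L :=
  evalact_eq hX x0 f.2.choose_spec.choose_spec h

lemma validPR_id : ValidPR 0 (fun _ => []) id := by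
  intro w hw z
  rw [List.length_eq_zero_iff.mp hw]
  rfl

lemma Fhom_id (x0 : X) : Fhom hX x0 idM = x0 :=
  Fhom_valid hX x0 idM validPR_id

lemma validPR_lam {n : ℕ} {L : List Bool → List Bool} {f : K → K}
    (h : ValidPR (n+1) L f) : ValidPR n (fun w => L (false :: w)) (lam f) := by
  intro w hw z
  show f (kcons false (pre w z)) = _
  exact h (false :: w) (by simp [hw]) z

lemma validPR_rho {n : ℕ} {L : List Bool → List Bool} {f : K → K}
    (h : ValidPR (n+1) L f) : ValidPR n (fun w => L (true :: w)) (rho f) := by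
  intro w hw z
  show f (kcons true (pre w z)) = _
  exact h (true :: w) (by simp [hw]) z

def joinL (Le Lf : List Bool → List Bool) : List Bool → List Bool
  | [] => []
  | b :: t => cond b (Lf t) (Le t)

lemma validPR_join {n : ℕ} {Le Lf : List Bool → List Bool} {e f : K → K}
    (he : ValidPR n Le e) (hf : ValidPR n Lf f) :
    ValidPR (n+1) (joinL Le Lf) (join e f) := by
  intro w hw z
  match w with
  | b :: t =>
    simp only [List.length_cons, Nat.add_right_cancel_iff] at hw
    show join e f (kcons b (pre t z)) = _
    rw [join_apply_pre]
    cases b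
    · exact he t hw z
    · exact hf t hw z

lemma validPR_lift {n m : ℕ} {L : List Bool → List Bool} {f : K → K}
    (h : ValidPR n L f) (hnm : n ≤ m) :
    ValidPR m (fun w => L (w.take n) ++ w.drop n) f := by
  have := validPR_ext h (m - n)
  rwa [Nat.add_sub_cancel' hnm] at this

lemma Fhom_hom (x0 : X) : IsCantorHom hM hX (Fhom hX x0) := by
  intro e f
  obtain ⟨ne, Le0, hLe0⟩ := e.2
  obtain ⟨nf, Lf0, hLf0⟩ := f.2
  set n := max ne nf with hn
  have hLe := validPR_lift hLe0 (le_max_left ne nf)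
  have hLf := validPR_lift hLf0 (le_max_right ne nf)
  have hj := validPR_join hLe hLf
  have h1 : Fhom hX x0 (hM.mu (e, f)) = evalact hX x0 (n+1) (joinL _ _) :=
    Fhom_valid hX x0 _ hj
  rw [h1, Fhom_valid hX x0 e hLe, Fhom_valid hX x0 f hLf]
  rfl

lemma eq_preM_of_valid0 {L : List Bool → List Bool} {f : M}
    (h : ValidPR 0 L f.1) : f = preM (L []) := by
  apply Subtype.ext
  funext z
  have := h [] rfl z
  simpa [preM] using this

lemma pre_nil_eq_id : pre [] = id := by funext x; rfl

lemma preM_concat (w : List Bool) (c : Bool) :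
    preM (w ++ [c]) = cond c (hM.mu.symm (preM w)).2 (hM.mu.symm (preM w)).1 := by
  cases c <;> apply Subtype.ext <;> funext y
  · show pre (w ++ [false]) y = lam (pre w) y
    rw [pre_concat]; rfl
  · show pre (w ++ [true]) y = rho (pre w) y
    rw [pre_concat]; rfl

lemma hom_preM {G : M → X} (hG : IsCantorHom hM hX G) (x0 : X) (hGid : G idM = x0)
    (w : List Bool) : G (preM w) = act hX w x0 := by
  induction w using List.reverseRecOn with
  | nil =>
    have : preM [] = idM := Subtype.ext pre_nil_eq_id
    rw [this, hGid]
    rfl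
  | append_singleton w c ih =>
    rw [preM_concat, act_concat, ← ih]
    cases c
    · show G (hM.mu.symm (preM w)).1 = _
      exact (hom_lam hX hM hG (preM w)).1
    · show G (hM.mu.symm (preM w)).2 = _
      exact (hom_lam hX hM hG (preM w)).2

lemma hom_eq_evalact {G : M → X} (hG : IsCantorHom hM hX G) (x0 : X) (hGid : G idM = x0) :
    ∀ (n : ℕ) (L : List Bool → List Bool) (f : M), ValidPR n L f.1 →
      G f = evalact hX x0 n L := by
  intro n
  induction n with
  | zero =>
    intro L f h
    rw [eq_preM_of_valid0 h]
    exact hom_preM hX hG x0 hGid (L [])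
  | succ n ih =>
    intro L f h
    have hsplit : f = hM.mu (⟨lam f.1, mpred_lam f.2⟩, ⟨rho f.1, mpred_rho f.2⟩) :=
      Subtype.ext (join_lam_rho f.1).symm
    have hl := ih (fun w => L (false :: w)) ⟨lam f.1, mpred_lam f.2⟩ (validPR_lam h)
    have hr := ih (fun w => L (true :: w)) ⟨rho f.1, mpred_rho f.2⟩ (validPR_rho h)
    calc G f = hX.mu (G ⟨lam f.1, mpred_lam f.2⟩, G ⟨rho f.1, mpred_rho f.2⟩) := by
          conv_lhs => rw [hsplit]
          exact hG _ _
      _ = evalact hX x0 (n+1) L := by rw [hl, hr]; rfl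

/-- `M` is the free Cantor algebra on the single generator `idM`. -/
theorem M_free : IsFreeCantorOn hM ![idM] := by
  intro X hX x
  refine ⟨Fhom hX (x 0), ⟨Fhom_hom hX (x 0), ?_⟩, ?_⟩
  · intro i
    have : i = 0 := Subsingleton.elim i 0
    subst this
    exact Fhom_id hX (x 0)
  · rintro G ⟨hGhom, hGgen⟩
    funext f
    obtain ⟨n, L, hL⟩ := f.2
    have h1 : G f = evalact hX (x 0) n L :=
      hom_eq_evalact hX hGhom (x 0) (hGgen 0) n L f hL
    have h2 : Fhom hX (x 0) f = evalact hX (x 0) n L := Fhom_valid hX (x 0) f hL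
    rw [h1, h2]

end CantorV
namespace CantorV

section genAPI
variable {C : Type} (hC : CantorStr C)

lemma gen_subset (A : Set C) : A ⊆ genCantorSubalgebra hC A := by
  intro x hx
  intro S hS
  exact hS.2 hx

lemma gen_sub (A : Set C) : IsCantorSubalgebra hC (genCantorSubalgebra hC A) := by
  constructor
  · intro x hx y hy S hS
    exact hS.1.1 x (hx S hS) y (hy S hS)
  · intro x hx
    constructor <;> intro S hS
    · exact (hS.1.2 x (hx S hS)).1
    · exact (hS.1.2 x (hx S hS)).2

lemma gen_min {A S : Set C} (hS : IsCantorSubalgebra hC S) (hAS : A ⊆ S) :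
    genCantorSubalgebra hC A ⊆ S := fun _ hx => hx S ⟨hS, hAS⟩

lemma gen_mono {A B : Set C} (h : A ⊆ B) :
    genCantorSubalgebra hC A ⊆ genCantorSubalgebra hC B := by
  intro x hx S hS
  exact hx S ⟨hS.1, h.trans hS.2⟩

end genAPI

/-- The union of the cones over the words in `l`. -/
def ConeS (l : List (List Bool)) : Set K := {x | ∃ w ∈ l, ∃ z, x = pre w z}

/-- The subalgebra of maps with values in the cones of `l`. -/
def Sset (l : List (List Bool)) : Set M := {f | ∀ x, f.1 x ∈ ConeS l}

def preSet (l : List (List Bool)) : Set M := {f | ∃ w ∈ l, f = preM w}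

lemma ConeS_mono {l l' : List (List Bool)} (h : ∀ w ∈ l, w ∈ l') :
    ConeS l ⊆ ConeS l' := by
  rintro x ⟨w, hw, z, rfl⟩
  exact ⟨w, h w hw, z, rfl⟩

lemma Sset_sub (l : List (List Bool)) : IsCantorSubalgebra hM (Sset l) := by
  constructor
  · intro e he f hf x
    show join e.1 f.1 x ∈ _
    unfold join
    cases x 0 <;> simp only [cond] <;> [exact he _; exact hf _]
  · intro f hf
    constructor
    · intro x
      exact hf (kcons false x)
    · intro x
      exact hf (kcons true x)

lemma preM_mem_Sset {l : List (List Bool)} {w : List Bool} (hw : w ∈ l) :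
    preM w ∈ Sset l := fun x => ⟨w, hw, x, rfl⟩

def maxLen (l : List (List Bool)) : ℕ := (l.map List.length).foldr max 0

lemma len_le_maxLen {l : List (List Bool)} {w : List Bool} (hw : w ∈ l) :
    w.length ≤ maxLen l := by
  induction l with
  | nil => cases hw
  | cons a t ih =>
    rw [List.mem_cons] at hw
    rcases hw with rfl | hw
    · exact le_max_left _ _
    · exact le_trans (ih hw) (le_max_right _ _)

lemma preM_append_mem {S : Set M} (hS : IsCantorSubalgebra hM S) {b : List Bool}
    (hb : preM b ∈ S) (t : List Bool) : preM (b ++ t) ∈ S := by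
  induction t using List.reverseRecOn with
  | nil => simpa using hb
  | append_singleton t c ih =>
    rw [← List.append_assoc, preM_concat]
    cases c
    · exact (hS.2 _ ih).1
    · exact (hS.2 _ ih).2

lemma join_pre_split (w : List Bool) :
    join (pre (w ++ [false])) (pre (w ++ [true])) = pre w := by
  funext x
  unfold join
  cases hx : x 0
  · show pre (w ++ [false]) (ktail x) = pre w x
    rw [pre_concat]
    conv_rhs => rw [← kcons_head_tail x, hx]
  · show pre (w ++ [true]) (ktail x) = pre w x
    rw [pre_concat]
    conv_rhs => rw [← kcons_head_tail x, hx]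

lemma preM_split (w : List Bool) :
    preM w = hM.mu (preM (w ++ [false]), preM (w ++ [true])) :=
  Subtype.ext (join_pre_split w).symm

lemma preM_mem_of_cone {l : List (List Bool)} {S : Set M} (hS : IsCantorSubalgebra hM S)
    (hpre : ∀ w ∈ l, preM w ∈ S) :
    ∀ (m : ℕ) (w : List Bool), maxLen l ≤ w.length + m →
      (∀ z, pre w z ∈ ConeS l) → preM w ∈ S := by
  intro m
  induction m with
  | zero =>
    intro w hlen hcone
    obtain ⟨b, hb, z', hz'⟩ := hcone (fun _ => false)
    have hble : b.length ≤ w.length := le_trans (len_le_maxLen hb) (by omega)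
    have h1 : ktake b.length (pre b z') = b := ktake_pre rfl z'
    have h2 : ktake b.length (pre w (fun _ => false)) = w.take b.length :=
      ktake_pre_le hble _
    have heq : w.take b.length = b := by
      rw [← h2, hz']
      exact h1
    have hpref : b <+: w := by
      rw [← heq]
      exact List.take_prefix _ _
    obtain ⟨t, rfl⟩ := hpref
    exact preM_append_mem hS (hpre b hb) t
  | succ m ih =>
    intro w hlen hcone
    by_cases hex : ∃ b ∈ l, b <+: w
    · obtain ⟨b, hb, t, rfl⟩ := hex
      exact preM_append_mem hS (hpre b hb) t
    · rw [preM_split w]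
      have hf : preM (w ++ [false]) ∈ S := by
        apply ih
        · simp; omega
        · intro z
          rw [pre_concat]
          exact hcone (kcons false z)
      have ht : preM (w ++ [true]) ∈ S := by
        apply ih
        · simp; omega
        · intro z
          rw [pre_concat]
          exact hcone (kcons true z)
      exact hS.1 _ hf _ ht

lemma mem_of_Sset {l : List (List Bool)} {S : Set M} (hS : IsCantorSubalgebra hM S)
    (hpre : ∀ w ∈ l, preM w ∈ S) :
    ∀ (n : ℕ) (L : List Bool → List Bool) (f : M), ValidPR n L f.1 →
      (∀ x, f.1 x ∈ ConeS l) → f ∈ S := by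
  intro n
  induction n with
  | zero =>
    intro L f hL hcone
    rw [eq_preM_of_valid0 hL]
    apply preM_mem_of_cone hS hpre (maxLen l) (L [])
    · omega
    · intro z
      have : pre (L []) z = f.1 z := (hL [] rfl z).symm
      rw [this]
      exact hcone z
  | succ n ih =>
    intro L f hL hcone
    have hsplit : f = hM.mu (⟨lam f.1, mpred_lam f.2⟩, ⟨rho f.1, mpred_rho f.2⟩) :=
      Subtype.ext (join_lam_rho f.1).symm
    rw [hsplit]
    apply hS.1
    · exact ih _ _ (validPR_lam hL) (fun x => hcone (kcons false x))
    · exact ih _ _ (validPR_rho hL) (fun x => hcone (kcons true x))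

lemma symm_fst_eq (f : M) : (hM.mu.symm f).1 = ⟨lam f.1, mpred_lam f.2⟩ :=
  Subtype.ext rfl

lemma symm_snd_eq (f : M) : (hM.mu.symm f).2 = ⟨rho f.1, mpred_rho f.2⟩ :=
  Subtype.ext rfl

lemma preM_L_mem {S : Set M} (hS : IsCantorSubalgebra hM S) :
    ∀ (n : ℕ) (L : List Bool → List Bool) (f : M), ValidPR n L f.1 → f ∈ S →
      ∀ w, w.length = n → preM (L w) ∈ S := by
  intro n
  induction n with
  | zero =>
    intro L f hL hf w hw
    rw [List.length_eq_zero_iff.mp hw, ← eq_preM_of_valid0 hL]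
    exact hf
  | succ n ih =>
    intro L f hL hf w hw
    match w with
    | b :: t =>
      simp only [List.length_cons, Nat.add_right_cancel_iff] at hw
      cases b
      · have hmem : (⟨lam f.1, mpred_lam f.2⟩ : M) ∈ S := by
          rw [← symm_fst_eq]; exact (hS.2 f hf).1
        exact ih (fun u => L (false :: u)) _ (validPR_lam hL) hmem t hw
      · have hmem : (⟨rho f.1, mpred_rho f.2⟩ : M) ∈ S := by
          rw [← symm_snd_eq]; exact (hS.2 f hf).2
        exact ih (fun u => L (true :: u)) _ (validPR_rho hL) hmem t hw

/-- All binary words of length `n`. -/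
def enumW : ℕ → List (List Bool)
  | 0 => [[]]
  | n+1 => (enumW n).map (false :: ·) ++ (enumW n).map (true :: ·)

lemma mem_enumW {n : ℕ} {w : List Bool} : w ∈ enumW n ↔ w.length = n := by
  induction n generalizing w with
  | zero => simp [enumW, List.length_eq_zero_iff]
  | succ n ih =>
    cases w with
    | nil => simp [enumW]
    | cons b t =>
      simp only [enumW, List.mem_append, List.mem_map, List.length_cons,
        Nat.add_right_cancel_iff]
      cases b <;> simp [ih]

lemma exists_coneList {F : Set M} (hF : F.Finite) :
    ∃ lA : List (List Bool), (∀ f ∈ F, f ∈ Sset lA) ∧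
      (∀ w ∈ lA, preM w ∈ genCantorSubalgebra hM F) := by
  refine Set.Finite.induction_on (motive := fun F _ => ∃ lA : List (List Bool),
      (∀ f ∈ F, f ∈ Sset lA) ∧ (∀ w ∈ lA, preM w ∈ genCantorSubalgebra hM F))
    F hF ⟨[], by simp, by simp⟩ ?_
  rintro f F' hfF' hF' ih
  · 
    obtain ⟨lA, h1, h2⟩ := ih
    obtain ⟨n, L, hL⟩ := f.2
    refine ⟨lA ++ (enumW n).map L, ?_, ?_⟩
    · intro g hg
      rcases hg with rfl | hg
      · intro x
        refine ⟨L (ktake n x), ?_, kdrop n x, ?_⟩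
        · apply List.mem_append_right
          exact List.mem_map.mpr ⟨ktake n x, mem_enumW.mpr (ktake_length n x), rfl⟩
        · conv_lhs => rw [← pre_ktake_kdrop n x]
          rw [hL _ (ktake_length n x)]
      · intro x
        exact ConeS_mono (fun w hw => List.mem_append_left _ hw) (h1 g hg x)
    · intro w hw
      rcases List.mem_append.mp hw with hw | hw
      · exact gen_mono hM (Set.subset_insert f F') (h2 w hw)
      · obtain ⟨u, hu, rfl⟩ := List.mem_map.mp hw
        refine preM_L_mem (gen_sub hM _) n L f hL ?_ u (mem_enumW.mp hu)
        exact gen_subset hM _ (Set.mem_insert f F')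

lemma clone_eq_Sset {X : Set M} {F : Set M} (hF : F.Finite)
    (hXF : X = genCantorSubalgebra hM F) : ∃ lA, X = Sset lA := by
  obtain ⟨lA, h1, h2⟩ := exists_coneList hF
  refine ⟨lA, Set.Subset.antisymm ?_ ?_⟩
  · rw [hXF]
    exact gen_min hM (Sset_sub lA) h1
  · intro f hf
    obtain ⟨n, L, hL⟩ := f.2
    rw [hXF]
    exact mem_of_Sset (by rw [← hXF]; rw [hXF]; exact gen_sub hM F)
      (fun w hw => h2 w hw) n L f hL hf

end CantorV
namespace CantorV

lemma ktake_take {j n : ℕ} (h : j ≤ n) (x : K) : (ktake n x).take j = ktake j x := by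
  induction j generalizing n x with
  | zero => rfl
  | succ j ih =>
    cases n with
    | zero => omega
    | succ n =>
      show (x 0 :: ktake n (ktail x)).take (j+1) = x 0 :: ktake j (ktail x)
      rw [List.take_succ_cons, ih (by omega)]

lemma mpred_comp_pre {g : K → K} (hg : Mpred g) (w : List Bool) :
    Mpred (fun x => g (pre w x)) := by
  induction w using List.reverseRecOn with
  | nil => exact hg
  | append_singleton w c ih =>
    cases c
    · have he : (fun x => g (pre (w ++ [false]) x)) = lam (fun y => g (pre w y)) := by
        funext x
        rw [pre_concat]
        rfl
      rw [he]
      exact mpred_lam ih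
    · have he : (fun x => g (pre (w ++ [true]) x)) = rho (fun y => g (pre w y)) := by
        funext x
        rw [pre_concat]
        rfl
      rw [he]
      exact mpred_rho ih

lemma mpred_comp_aux {g : K → K} (hg : Mpred g) :
    ∀ (n : ℕ) (L : List Bool → List Bool) (f : K → K), ValidPR n L f →
      Mpred (fun x => g (f x)) := by
  intro n
  induction n with
  | zero =>
    intro L f hL
    have hf : f = pre (L []) := by
      funext z
      simpa using hL [] rfl z
    rw [hf]
    exact mpred_comp_pre hg (L [])
  | succ n ih =>
    intro L f hL
    have he : (fun x => g (f x)) =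
        join (fun x => g (lam f x)) (fun x => g (rho f x)) := by
      funext x
      conv_lhs => rw [← join_lam_rho f]
      unfold join
      cases x 0 <;> rfl
    rw [he]
    exact mpred_join (ih _ _ (validPR_lam hL)) (ih _ _ (validPR_rho hL))

lemma mpred_comp {f g : K → K} (hf : Mpred f) (hg : Mpred g) : Mpred (g ∘ f) := by
  obtain ⟨n, L, hL⟩ := hf
  exact mpred_comp_aux hg n L f hL

lemma isPR_kcons (c : Bool) {n : ℕ} {h : K → K} (hh : IsPR n h) :
    IsPR n (fun y => kcons c (h y)) := by
  obtain ⟨L, hL⟩ := hh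
  refine ⟨fun w => c :: L w, fun w hw z => ?_⟩
  show kcons c (h (pre w z)) = pre (c :: L w) z
  rw [hL w hw z]
  rfl

lemma isPR_kdrop (b : List Bool) : IsPR b.length (fun y => kdrop b.length y) := by
  refine ⟨fun _ => [], fun w hw z => ?_⟩
  show kdrop b.length (pre w z) = pre [] z
  rw [kdrop_pre hw]
  rfl

lemma isPR_ite {n : ℕ} (p : List Bool → Prop) [DecidablePred p] {f g : K → K}
    (hf : IsPR n f) (hg : IsPR n g) :
    IsPR n (fun y => if p (ktake n y) then f y else g y) := by
  obtain ⟨Lf, hLf⟩ := hf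
  obtain ⟨Lg, hLg⟩ := hg
  refine ⟨fun w => if p w then Lf w else Lg w, fun w hw z => ?_⟩
  show (if p (ktake n (pre w z)) then f (pre w z) else g (pre w z)) =
    pre (if p w then Lf w else Lg w) z
  rw [ktake_pre hw]
  by_cases hp : p w
  · rw [if_pos hp, if_pos hp]
    exact hLf w hw z
  · rw [if_neg hp, if_neg hp]
    exact hLg w hw z

/-- The coding map onto the cones of `l`. -/
def kap : List (List Bool) → K → K
  | [] => id
  | [b] => pre b
  | b :: c :: r => join (pre b) (kap (c :: r))

/-- The decoding map. -/
def kap' : List (List Bool) → K → K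
  | [] => id
  | [b] => fun y => kdrop b.length y
  | b :: c :: r => fun y =>
      if ktake b.length y = b then kcons false (kdrop b.length y)
      else kcons true (kap' (c :: r) y)

lemma kap_range : ∀ (l : List (List Bool)), l ≠ [] → ∀ y, kap l y ∈ ConeS l := by
  intro l
  induction l with
  | nil => intro h; exact absurd rfl h
  | cons b r ih =>
    intro _ y
    match r with
    | [] => exact ⟨b, by simp, y, rfl⟩
    | c :: r' =>
      show join (pre b) (kap (c :: r')) y ∈ _
      unfold join
      cases y 0 with
      | false => exact ⟨b, by simp, ktail y, rfl⟩
      | true =>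
        simp only [cond]
        exact ConeS_mono (fun w hw => by simp [hw]) (ih (by simp) (ktail y))

lemma mpred_kap : ∀ (l : List (List Bool)), Mpred (kap l) := by
  intro l
  induction l with
  | nil => exact mpred_id
  | cons b r ih =>
    match r with
    | [] => exact mpred_pre b
    | c :: r' => exact mpred_join (mpred_pre b) ih

lemma mpred_kap' : ∀ (l : List (List Bool)), Mpred (kap' l) := by
  intro l
  induction l with
  | nil => exact mpred_id
  | cons b r ih =>
    match r with
    | [] => exact ⟨b.length, isPR_kdrop b⟩
    | c :: r' =>
      obtain ⟨m, hm⟩ := ih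
      set n := max b.length m with hn
      have h1 : IsPR n (fun y => kcons false (kdrop b.length y)) :=
        isPR_mono (le_max_left _ _) (isPR_kcons false (isPR_kdrop b))
      have h2 : IsPR n (fun y => kcons true (kap' (c :: r') y)) :=
        isPR_mono (le_max_right _ _) (isPR_kcons true hm)
      refine ⟨n, ?_⟩
      have hb : b.length ≤ n := le_max_left _ _
      have he : (kap' (b :: c :: r')) = fun y =>
          if (fun w => w.take b.length = b) (ktake n y)
          then (fun y => kcons false (kdrop b.length y)) y
          else (fun y => kcons true (kap' (c :: r') y)) y := by
        funext y
        have hiff : (ktake b.length y = b) ↔ ((ktake n y).take b.length = b) := by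
          rw [ktake_take hb]
        show (if ktake b.length y = b then kcons false (kdrop b.length y)
          else kcons true (kap' (c :: r') y)) = _
        exact if_congr hiff rfl rfl
      rw [he]
      exact isPR_ite (fun w => w.take b.length = b) h1 h2

lemma kap'_kap {N : ℕ} : ∀ (l : List (List Bool)), (∀ w ∈ l, w.length = N) → l.Nodup →
    ∀ x, kap' l (kap l x) = x := by
  intro l
  induction l with
  | nil => intro _ _ x; rfl
  | cons b r ih =>
    intro hlen hnd x
    match r with
    | [] =>
      show kdrop b.length (pre b x) = x
      exact kdrop_pre rfl x
    | c :: r' =>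
      show kap' (b :: c :: r') (join (pre b) (kap (c :: r')) x) = x
      cases hx : x 0 with
      | false =>
        have hj : join (pre b) (kap (c :: r')) x = pre b (ktail x) := by
          unfold join
          rw [hx]
          rfl
        rw [hj]
        show (if ktake b.length (pre b (ktail x)) = b then _ else _) = x
        rw [if_pos (ktake_pre rfl _), kdrop_pre rfl]
        rw [← hx, kcons_head_tail]
      | true =>
        have hj : join (pre b) (kap (c :: r')) x = kap (c :: r') (ktail x) := by
          unfold join
          rw [hx]
          rfl
        rw [hj]
        obtain ⟨v, hv, z, hz⟩ := kap_range (c :: r') (by simp) (ktail x)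
        have hvb : v ≠ b := by
          rintro rfl
          exact (List.nodup_cons.mp hnd).1 hv
        have hnp : ¬ ktake b.length (kap (c :: r') (ktail x)) = b := by
          rw [hz]
          have hvN : v.length = N := hlen v (by simp [hv])
          have hbN : b.length = N := hlen b (by simp)
          rw [ktake_pre (by omega : v.length = b.length) z]
          exact hvb
        show (if ktake b.length (kap (c :: r') (ktail x)) = b then _ else _) = x
        rw [if_neg hnp]
        rw [ih (fun w hw => hlen w (by simp [hw])) (List.nodup_cons.mp hnd).2 (ktail x)]
        rw [← hx, kcons_head_tail]

lemma kap_kap' {N : ℕ} : ∀ (l : List (List Bool)), (∀ w ∈ l, w.length = N) → l.Nodup →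
    ∀ y ∈ ConeS l, kap l (kap' l y) = y := by
  intro l
  induction l with
  | nil => rintro _ _ y ⟨w, hw, _⟩; cases hw
  | cons b r ih =>
    intro hlen hnd y hy
    match r with
    | [] =>
      obtain ⟨v, hv, z, rfl⟩ := hy
      obtain rfl : v = b := by simpa using hv
      show pre v (kdrop v.length (pre v z)) = pre v z
      rw [kdrop_pre rfl]
    | c :: r' =>
      obtain ⟨v, hv, z, rfl⟩ := hy
      by_cases hvb : v = b
      · subst hvb
        show kap (v :: c :: r') (if ktake v.length (pre v z) = v then _ else _) = _
        rw [if_pos (ktake_pre rfl z), kdrop_pre rfl]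
        show join (pre v) (kap (c :: r')) (kcons false z) = pre v z
        rw [join_apply_pre]
        rfl
      · have hvr : v ∈ c :: r' := by
          rcases (List.mem_cons.mp hv) with h | h
          · exact absurd h hvb
          · exact h
        have hvN : v.length = N := hlen v hv
        have hbN : b.length = N := hlen b (by simp)
        have hneg : ¬ ktake b.length (pre v z) = b := by
          rw [ktake_pre (by omega : v.length = b.length) z]
          exact hvb
        show kap (b :: c :: r') (if ktake b.length (pre v z) = b then _ else _) = _
        rw [if_neg hneg]
        show join (pre b) (kap (c :: r')) (kcons true (kap' (c :: r') (pre v z))) = pre v z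
        rw [join_apply_pre]
        show kap (c :: r') (kap' (c :: r') (pre v z)) = pre v z
        exact ih (fun w hw => hlen w (by simp [hw])) (List.nodup_cons.mp hnd).2 _ ⟨v, hvr, z, rfl⟩

end CantorV
namespace CantorV

/-- The complementary antichain at level `maxLen lA`. -/
def lB (lA : List (List Bool)) : List (List Bool) :=
  ((enumW (maxLen lA)).filter (fun v => decide (¬ ∃ a ∈ lA, a <+: v))).dedup

lemma lB_mem {lA : List (List Bool)} {v : List Bool} :
    v ∈ lB lA ↔ v.length = maxLen lA ∧ ¬ ∃ a ∈ lA, a <+: v := by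
  unfold lB
  rw [List.mem_dedup, List.mem_filter, mem_enumW, decide_eq_true_eq]

lemma lB_nodup (lA : List (List Bool)) : (lB lA).Nodup := List.nodup_dedup _

lemma lB_len {lA : List (List Bool)} : ∀ v ∈ lB lA, v.length = maxLen lA :=
  fun v hv => (lB_mem.mp hv).1

lemma mem_coneS_of_take {lA : List (List Bool)} {n : ℕ} {x : K}
    (h : ∃ a ∈ lA, a <+: ktake n x) : x ∈ ConeS lA := by
  obtain ⟨a, ha, t, ht⟩ := h
  refine ⟨a, ha, pre t (kdrop n x), ?_⟩
  rw [← pre_append, ht, pre_ktake_kdrop]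

lemma take_prefix_of_cone {lA : List (List Bool)} {n : ℕ} {x : K}
    (hn : ∀ a ∈ lA, a.length ≤ n) (h : x ∈ ConeS lA) : ∃ a ∈ lA, a <+: ktake n x := by
  obtain ⟨a, ha, z, rfl⟩ := h
  refine ⟨a, ha, ktake (n - a.length) z, ?_⟩
  rw [ktake_pre_ge (hn a ha) z]

lemma cond_iff (lA : List (List Bool)) (x : K) :
    (∃ a ∈ lA, a <+: ktake (maxLen lA) x) ↔ x ∈ ConeS lA := by
  constructor
  · exact mem_coneS_of_take
  · exact take_prefix_of_cone (fun a ha => len_le_maxLen ha)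

lemma cones_full (lA : List (List Bool)) (x : K) :
    x ∈ ConeS lA ∨ x ∈ ConeS (lB lA) := by
  by_cases h : ∃ a ∈ lA, a <+: ktake (maxLen lA) x
  · exact Or.inl (mem_coneS_of_take h)
  · right
    refine ⟨ktake (maxLen lA) x, lB_mem.mpr ⟨ktake_length _ _, ?_⟩, kdrop (maxLen lA) x,
      (pre_ktake_kdrop _ _).symm⟩
    intro hc
    apply h
    obtain ⟨a, ha, hpre⟩ := hc
    exact ⟨a, ha, hpre⟩

lemma cones_disj (lA : List (List Bool)) (x : K)
    (hA : x ∈ ConeS lA) (hB : x ∈ ConeS (lB lA)) : False := by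
  obtain ⟨b, hb, z, rfl⟩ := hB
  obtain ⟨hlen, hnpre⟩ := lB_mem.mp hb
  apply hnpre
  obtain ⟨a, ha, hpre⟩ := take_prefix_of_cone (fun a ha => len_le_maxLen ha) hA
  rw [ktake_pre hlen] at hpre
  exact ⟨a, ha, hpre⟩

lemma lB_ne_nil {lA : List (List Bool)} (hproper : Sset lA ≠ Set.univ) : lB lA ≠ [] := by
  intro hnil
  apply hproper
  apply Set.eq_univ_of_forall
  intro f x
  rcases cones_full lA (f.1 x) with h | h
  · exact h
  · obtain ⟨b, hb, _⟩ := h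
    rw [hnil] at hb
    cases hb

/-- Representation of automorphisms: `v f = (v id) ∘ f`. -/
lemma aut_rep (v : ↥(cantorAut hM)) (f : M) :
    ((v : Equiv.Perm M) f).1 = fun x => ((v : Equiv.Perm M) idM).1 (f.1 x) := by
  set g := (v : Equiv.Perm M) idM with hg
  have h1 : IsCantorHom hM hM (fun f => (v : Equiv.Perm M) f) := v.2
  have h2 : IsCantorHom hM hM (fun f : M => (⟨fun x => g.1 (f.1 x),
      mpred_comp f.2 g.2⟩ : M)) := by
    intro e f
    apply Subtype.ext
    show (fun x => g.1 (join e.1 f.1 x)) = join _ _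
    funext x
    show g.1 (join e.1 f.1 x) = cond (x 0) (g.1 (f.1 (ktail x))) (g.1 (e.1 (ktail x)))
    unfold join
    cases x 0 <;> rfl
  obtain ⟨F, _, huniq⟩ := M_free M hM ![g]
  have e1 : (fun f => (v : Equiv.Perm M) f) = F := by
    apply huniq
    refine ⟨h1, fun i => ?_⟩
    have : i = 0 := Subsingleton.elim i 0
    subst this
    rfl
  have e2 : (fun f : M => (⟨fun x => g.1 (f.1 x), mpred_comp f.2 g.2⟩ : M)) = F := by
    apply huniq
    refine ⟨h2, fun i => ?_⟩
    have : i = 0 := Subsingleton.elim i 0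
    subst this
    apply Subtype.ext
    rfl
  have := congrFun (e1.trans e2.symm) f
  rw [this]

lemma aut_comp_inv (u : ↥(cantorAut hM)) (x : K) :
    ((u : Equiv.Perm M) idM).1 ((((u⁻¹ : ↥(cantorAut hM)) : Equiv.Perm M) idM).1 x) = x := by
  have h := aut_rep u (((u⁻¹ : ↥(cantorAut hM)) : Equiv.Perm M) idM)
  have h2 : (u : Equiv.Perm M) (((u⁻¹ : ↥(cantorAut hM)) : Equiv.Perm M) idM) = idM := by
    have he : ((u⁻¹ : ↥(cantorAut hM)) : Equiv.Perm M) = ((u : Equiv.Perm M))⁻¹ := rfl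
    rw [he]
    exact Equiv.apply_symm_apply _ _
  rw [h2] at h
  exact (congrFun h x).symm

lemma aut_inv_comp (u : ↥(cantorAut hM)) (x : K) :
    (((u⁻¹ : ↥(cantorAut hM)) : Equiv.Perm M) idM).1 (((u : Equiv.Perm M) idM).1 x) = x := by
  have h := aut_rep (u⁻¹) ((u : Equiv.Perm M) idM)
  have h2 : ((u⁻¹ : ↥(cantorAut hM)) : Equiv.Perm M) ((u : Equiv.Perm M) idM) = idM := by
    have he : ((u⁻¹ : ↥(cantorAut hM)) : Equiv.Perm M) = ((u : Equiv.Perm M))⁻¹ := rfl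
    rw [he]
    exact Equiv.symm_apply_apply _ _
  rw [h2] at h
  exact (congrFun h x).symm

lemma mem_fix_iff (lA : List (List Bool)) (v : ↥(cantorAut hM)) :
    v ∈ fixCantor hM (Sset lA) ↔ ∀ x ∈ ConeS lA, ((v : Equiv.Perm M) idM).1 x = x := by
  constructor
  · rintro h x ⟨a, ha, z, rfl⟩
    have hfix : (v : Equiv.Perm M) (preM a) = preM a := h (preM a) (preM_mem_Sset ha)
    have := aut_rep v (preM a)
    rw [hfix] at this
    exact (congrFun this z).symm
  · intro h f hf
    apply Subtype.ext
    rw [aut_rep v f]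
    funext x
    exact h (f.1 x) (hf x)

lemma keyclaim (lA : List (List Bool)) {g g' : K → K}
    (hgA : ∀ x ∈ ConeS lA, g x = x) (hg'g : ∀ x, g' (g x) = x)
    {x : K} (hx : x ∈ ConeS (lB lA)) : g x ∈ ConeS (lB lA) := by
  rcases cones_full lA (g x) with h | h
  · exfalso
    have h3 : g (g x) = g x := hgA _ h
    have hgid : g' (g x) = g x := by
      calc g' (g x) = g' (g (g x)) := by rw [h3]
        _ = g x := hg'g (g x)
    have h4 := hg'g x
    rw [hgid] at h4
    rw [← h4] at hx
    exact cones_disj lA (g x) h hx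
  · exact h

/-- Glue the identity on the cones of `lA` with a conjugated copy of `h` elsewhere. -/
noncomputable def paste (lA : List (List Bool)) (h : K → K) : K → K := fun x =>
  if ∃ a ∈ lA, a <+: ktake (maxLen lA) x then x
  else kap (lB lA) (h (kap' (lB lA) x))

lemma paste_pos {lA : List (List Bool)} (h : K → K) {x : K} (hx : x ∈ ConeS lA) :
    paste lA h x = x := by
  unfold paste
  rw [if_pos ((cond_iff lA x).mpr hx)]

lemma paste_neg {lA : List (List Bool)} (h : K → K) {x : K} (hx : ¬ x ∈ ConeS lA) :
    paste lA h x = kap (lB lA) (h (kap' (lB lA) x)) := by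
  unfold paste
  rw [if_neg (fun hc => hx ((cond_iff lA x).mp hc))]

lemma mpred_paste (lA : List (List Bool)) {h : K → K} (hh : Mpred h) :
    Mpred (paste lA h) := by
  have hs : Mpred (fun x => kap (lB lA) (h (kap' (lB lA) x))) := by
    have h1 : Mpred (fun x => h (kap' (lB lA) x)) :=
      mpred_comp (mpred_kap' (lB lA)) hh
    exact mpred_comp h1 (mpred_kap (lB lA))
  obtain ⟨m, hm⟩ := hs
  set n := max (maxLen lA) m with hn
  have hN : maxLen lA ≤ n := le_max_left _ _
  have h1 : IsPR n (fun x : K => x) := isPR_mono (Nat.zero_le n) isPR_id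
  have h2 : IsPR n (fun x => kap (lB lA) (h (kap' (lB lA) x))) :=
    isPR_mono (le_max_right _ _) hm
  refine ⟨n, ?_⟩
  have he : paste lA h = fun x =>
      if (fun w => ∃ a ∈ lA, a <+: w.take (maxLen lA)) (ktake n x)
      then (fun x : K => x) x
      else (fun x => kap (lB lA) (h (kap' (lB lA) x))) x := by
    funext x
    have hiff : (∃ a ∈ lA, a <+: ktake (maxLen lA) x) ↔
        (∃ a ∈ lA, a <+: (ktake n x).take (maxLen lA)) := by
      rw [ktake_take hN]
    unfold paste
    exact if_congr hiff rfl rfl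
  rw [he]
  exact isPR_ite (fun w => ∃ a ∈ lA, a <+: w.take (maxLen lA)) h1 h2

end CantorV
namespace CantorV

noncomputable def mkAut (h h' : K → K) (hh : Mpred h) (hh' : Mpred h')
    (h1 : ∀ x, h (h' x) = x) (h2 : ∀ x, h' (h x) = x) : ↥(cantorAut hM) :=
  ⟨{ toFun := fun f => ⟨fun x => h (f.1 x), mpred_comp f.2 hh⟩
     invFun := fun f => ⟨fun x => h' (f.1 x), mpred_comp f.2 hh'⟩
     left_inv := fun f => Subtype.ext (funext fun x => h2 (f.1 x))
     right_inv := fun f => Subtype.ext (funext fun x => h1 (f.1 x)) },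
   by
     intro e f
     apply Subtype.ext
     funext x
     show h (join e.1 f.1 x) = join (fun x => h (e.1 x)) (fun x => h (f.1 x)) x
     unfold join
     cases x 0 <;> rfl⟩

lemma mkAut_apply (h h' : K → K) (hh : Mpred h) (hh' : Mpred h')
    (h1 : ∀ x, h (h' x) = x) (h2 : ∀ x, h' (h x) = x) (f : M) :
    (((mkAut h h' hh hh' h1 h2) : Equiv.Perm M) f).1 = fun x => h (f.1 x) := rfl

lemma autEq (u1 u2 : ↥(cantorAut hM))
    (h : ∀ f : M, ((u1 : Equiv.Perm M) f).1 = ((u2 : Equiv.Perm M) f).1) : u1 = u2 :=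
  Subtype.ext (Equiv.ext fun f => Subtype.ext (h f))

section MainIso

variable (lA : List (List Bool))

/-- `g v` : the function of the automorphism `v`. -/
noncomputable def gfun (v : ↥(cantorAut hM)) : K → K := ((v : Equiv.Perm M) idM).1

lemma gfun_fixA {v : ↥(cantorAut hM)} (hv : v ∈ fixCantor hM (Sset lA)) :
    ∀ x ∈ ConeS lA, gfun v x = x := (mem_fix_iff lA v).mp hv

lemma gfun_comp_inv (u : ↥(cantorAut hM)) (x : K) : gfun u (gfun u⁻¹ x) = x :=
  aut_comp_inv u x

lemma gfun_inv_comp (u : ↥(cantorAut hM)) (x : K) : gfun u⁻¹ (gfun u x) = x :=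
  aut_inv_comp u x

noncomputable def theta (hproper : Sset lA ≠ Set.univ) (v : ↥(fixCantor hM (Sset lA))) : ↥(cantorAut hM) :=
  mkAut (fun x => kap' (lB lA) (gfun v.1 (kap (lB lA) x)))
    (fun x => kap' (lB lA) (gfun v.1⁻¹ (kap (lB lA) x)))
    (mpred_comp (mpred_comp (mpred_kap (lB lA)) ((v.1 : Equiv.Perm M) idM).2)
      (mpred_kap' (lB lA)))
    (mpred_comp (mpred_comp (mpred_kap (lB lA)) (((v.1⁻¹ : ↥(cantorAut hM)) :
      Equiv.Perm M) idM).2) (mpred_kap' (lB lA)))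
    (by
      intro x
      have hκ'κ : ∀ y, kap' (lB lA) (kap (lB lA) y) = y :=
        kap'_kap (lB lA) lB_len (lB_nodup lA)
      have hκκ' := kap_kap' (lB lA) lB_len (lB_nodup lA)
      have hκrange := kap_range (lB lA) (lB_ne_nil hproper)
      have hmem : gfun v.1⁻¹ (kap (lB lA) x) ∈ ConeS (lB lA) :=
        keyclaim lA (gfun_fixA lA ((fixCantor hM (Sset lA)).inv_mem v.2))
          (gfun_comp_inv v.1) (hκrange x)
      rw [hκκ' _ hmem, gfun_comp_inv v.1, hκ'κ])
    (by
      intro x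
      have hκ'κ : ∀ y, kap' (lB lA) (kap (lB lA) y) = y :=
        kap'_kap (lB lA) lB_len (lB_nodup lA)
      have hκκ' := kap_kap' (lB lA) lB_len (lB_nodup lA)
      have hκrange := kap_range (lB lA) (lB_ne_nil hproper)
      have hmem : gfun v.1 (kap (lB lA) x) ∈ ConeS (lB lA) :=
        keyclaim lA (gfun_fixA lA v.2) (gfun_inv_comp v.1) (hκrange x)
      rw [hκκ' _ hmem, gfun_inv_comp v.1, hκ'κ])

lemma paste_inv (hproper : Sset lA ≠ Set.univ) {h h' : K → K} (hhh' : ∀ x, h (h' x) = x) (x : K) :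
    paste lA h (paste lA h' x) = x := by
  by_cases hx : x ∈ ConeS lA
  · rw [paste_pos h' hx, paste_pos h hx]
  · have hxB : x ∈ ConeS (lB lA) := (cones_full lA x).resolve_left hx
    rw [paste_neg h' hx]
    have hyB : kap (lB lA) (h' (kap' (lB lA) x)) ∈ ConeS (lB lA) :=
      kap_range _ (lB_ne_nil hproper) _
    have hyA : ¬ (kap (lB lA) (h' (kap' (lB lA) x)) ∈ ConeS lA) :=
      fun hc => cones_disj lA _ hc hyB
    rw [paste_neg h hyA, kap'_kap (lB lA) lB_len (lB_nodup lA), hhh',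
      kap_kap' (lB lA) lB_len (lB_nodup lA) x hxB]

noncomputable def xi (hproper : Sset lA ≠ Set.univ) (u : ↥(cantorAut hM)) : ↥(fixCantor hM (Sset lA)) :=
  ⟨mkAut (paste lA (gfun u)) (paste lA (gfun u⁻¹))
    (mpred_paste lA ((u : Equiv.Perm M) idM).2)
    (mpred_paste lA (((u⁻¹ : ↥(cantorAut hM)) : Equiv.Perm M) idM).2)
    (paste_inv lA hproper (gfun_comp_inv u))
    (paste_inv lA hproper (gfun_inv_comp u)),
   (mem_fix_iff lA _).mpr (fun x hx => paste_pos _ hx)⟩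

end MainIso

end CantorV
namespace CantorV

section MainIso2

variable (lA : List (List Bool))

lemma gfun_theta (hproper : Sset lA ≠ Set.univ) (v : ↥(fixCantor hM (Sset lA))) :
    gfun (theta lA hproper v) = fun x => kap' (lB lA) (gfun v.1 (kap (lB lA) x)) := rfl

lemma gfun_xi (hproper : Sset lA ≠ Set.univ) (u : ↥(cantorAut hM)) :
    gfun (xi lA hproper u).1 = paste lA (gfun u) := rfl

lemma xi_theta (hproper : Sset lA ≠ Set.univ) (v : ↥(fixCantor hM (Sset lA))) :
    xi lA hproper (theta lA hproper v) = v := by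
  apply Subtype.ext
  apply autEq
  intro f
  rw [aut_rep v.1 f]
  funext x
  show paste lA (gfun (theta lA hproper v)) (f.1 x) = gfun v.1 (f.1 x)
  generalize f.1 x = y
  by_cases hy : y ∈ ConeS lA
  · rw [paste_pos _ hy, gfun_fixA lA v.2 y hy]
  · have hyB := (cones_full lA y).resolve_left hy
    rw [paste_neg _ hy, gfun_theta]
    dsimp only
    rw [kap_kap' (lB lA) lB_len (lB_nodup lA) y hyB]
    have hgB : gfun v.1 y ∈ ConeS (lB lA) :=
      keyclaim lA (gfun_fixA lA v.2) (gfun_inv_comp v.1) hyB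
    rw [kap_kap' (lB lA) lB_len (lB_nodup lA) _ hgB]

lemma theta_xi (hproper : Sset lA ≠ Set.univ) (u : ↥(cantorAut hM)) :
    theta lA hproper (xi lA hproper u) = u := by
  apply autEq
  intro f
  rw [aut_rep u f]
  funext x
  show kap' (lB lA) (gfun (xi lA hproper u).1 (kap (lB lA) (f.1 x))) = gfun u (f.1 x)
  rw [gfun_xi]
  generalize f.1 x = y
  have hκB := kap_range (lB lA) (lB_ne_nil hproper) y
  have hκA : ¬ kap (lB lA) y ∈ ConeS lA := fun hc => cones_disj lA _ hc hκB
  rw [paste_neg _ hκA, kap'_kap (lB lA) lB_len (lB_nodup lA),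
    kap'_kap (lB lA) lB_len (lB_nodup lA)]

lemma theta_mul (hproper : Sset lA ≠ Set.univ) (v w : ↥(fixCantor hM (Sset lA))) :
    theta lA hproper (v * w) = theta lA hproper v * theta lA hproper w := by
  apply autEq
  intro f
  funext x
  show kap' (lB lA) (gfun (v * w).1 (kap (lB lA) (f.1 x))) =
    kap' (lB lA) (gfun v.1 (kap (lB lA)
      (kap' (lB lA) (gfun w.1 (kap (lB lA) (f.1 x))))))
  generalize f.1 x = y
  have h1 : gfun w.1 (kap (lB lA) y) ∈ ConeS (lB lA) :=
    keyclaim lA (gfun_fixA lA w.2) (gfun_inv_comp w.1)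
      (kap_range (lB lA) (lB_ne_nil hproper) y)
  rw [kap_kap' (lB lA) lB_len (lB_nodup lA) _ h1]
  have hsplit := aut_rep v.1 ((w.1 : Equiv.Perm M) idM)
  have h2 : gfun (v * w).1 (kap (lB lA) y) =
      gfun v.1 (gfun w.1 (kap (lB lA) y)) := congrFun hsplit (kap (lB lA) y)
  rw [h2]

theorem main_M (X : Set M) (hX : IsClone hM X) :
    Nonempty (↥(fixCantor hM X) ≃* ↥(cantorAut hM)) := by
  obtain ⟨hsub, hne, hproper, F, hF, hXF⟩ := hX
  obtain ⟨lA, hXS⟩ := clone_eq_Sset hF hXF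
  subst hXS
  exact ⟨{ toFun := theta lA hproper, invFun := xi lA hproper,
           left_inv := xi_theta lA hproper, right_inv := theta_xi lA hproper,
           map_mul' := theta_mul lA hproper }⟩

end MainIso2

end CantorV
namespace CantorV

section Transfer

variable {C D : Type} (hC : CantorStr C) (hD : CantorStr D) (e : C → D) (e' : D → C)

def transferPerm (h1 : ∀ x, e' (e x) = x) (h2 : ∀ y, e (e' y) = y)
    (σ : Equiv.Perm C) : Equiv.Perm D where
  toFun := fun y => e (σ (e' y))
  invFun := fun y => e (σ.symm (e' y))
  left_inv := fun y => by
    show e (σ.symm (e' (e (σ (e' y))))) = y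
    rw [h1, Equiv.symm_apply_apply, h2]
  right_inv := fun y => by
    show e (σ (e' (e (σ.symm (e' y))))) = y
    rw [h1, Equiv.apply_symm_apply, h2]

lemma transferPerm_mem (he : IsCantorHom hC hD e) (he' : IsCantorHom hD hC e')
    (h1 : ∀ x, e' (e x) = x) (h2 : ∀ y, e (e' y) = y)
    {σ : Equiv.Perm C} (hσ : σ ∈ cantorAut hC) :
    transferPerm e e' h1 h2 σ ∈ cantorAut hD := by
  intro a b
  show e (σ (e' (hD.mu (a, b)))) = hD.mu (e (σ (e' a)), e (σ (e' b)))
  rw [he' a b, hσ (e' a) (e' b), he]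

def autTransfer (he : IsCantorHom hC hD e) (he' : IsCantorHom hD hC e')
    (h1 : ∀ x, e' (e x) = x) (h2 : ∀ y, e (e' y) = y) :
    ↥(cantorAut hC) ≃* ↥(cantorAut hD) where
  toFun v := ⟨transferPerm e e' h1 h2 v.1, transferPerm_mem hC hD e e' he he' h1 h2 v.2⟩
  invFun u := ⟨transferPerm e' e h2 h1 u.1, transferPerm_mem hD hC e' e he' he h2 h1 u.2⟩
  left_inv v := Subtype.ext (Equiv.ext fun x => by
    show e' (e (v.1 (e' (e x)))) = v.1 x
    rw [h1, h1])
  right_inv u := Subtype.ext (Equiv.ext fun y => by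
    show e (e' (u.1 (e (e' y)))) = u.1 y
    rw [h2, h2])
  map_mul' v w := Subtype.ext (Equiv.ext fun y => by
    show e (v.1 (w.1 (e' y))) = e (v.1 (e' (e (w.1 (e' y)))))
    rw [h1])

def fixTransfer (X : Set C) (he : IsCantorHom hC hD e) (he' : IsCantorHom hD hC e')
    (h1 : ∀ x, e' (e x) = x) (h2 : ∀ y, e (e' y) = y) :
    ↥(fixCantor hC X) ≃* ↥(fixCantor hD (e '' X)) where
  toFun v := ⟨⟨transferPerm e e' h1 h2 v.1.1,
      transferPerm_mem hC hD e e' he he' h1 h2 v.1.2⟩, by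
    rintro y ⟨x, hx, rfl⟩
    show e (v.1.1 (e' (e x))) = e x
    rw [h1, v.2 x hx]⟩
  invFun u := ⟨⟨transferPerm e' e h2 h1 u.1.1,
      transferPerm_mem hD hC e' e he' he h2 h1 u.1.2⟩, by
    intro x hx
    show e' (u.1.1 (e x)) = x
    rw [u.2 (e x) ⟨x, hx, rfl⟩, h1]⟩
  left_inv v := Subtype.ext (Subtype.ext (Equiv.ext fun x => by
    show e' (e (v.1.1 (e' (e x)))) = v.1.1 x
    rw [h1, h1]))
  right_inv u := Subtype.ext (Subtype.ext (Equiv.ext fun y => by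
    show e (e' (u.1.1 (e (e' y)))) = u.1.1 y
    rw [h2, h2]))
  map_mul' v w := Subtype.ext (Subtype.ext (Equiv.ext fun y => by
    show e (v.1.1 (w.1.1 (e' y))) = e (v.1.1 (e' (e (w.1.1 (e' y)))))
    rw [h1]))

lemma gen_image (he : IsCantorHom hC hD e) (he' : IsCantorHom hD hC e')
    (h1 : ∀ x, e' (e x) = x) (h2 : ∀ y, e (e' y) = y) (A : Set C) :
    e '' genCantorSubalgebra hC A = genCantorSubalgebra hD (e '' A) := by
  apply Set.Subset.antisymm
  · rintro y ⟨x, hx, rfl⟩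
    have hsub : IsCantorSubalgebra hC (e ⁻¹' genCantorSubalgebra hD (e '' A)) := by
      constructor
      · intro x1 hx1 x2 hx2
        show e (hC.mu (x1, x2)) ∈ genCantorSubalgebra hD (e '' A)
        rw [he x1 x2]
        exact (gen_sub hD _).1 _ hx1 _ hx2
      · intro x hx
        constructor
        · show e ((hC.mu.symm x).1) ∈ genCantorSubalgebra hD (e '' A)
          rw [(hom_lam hD hC he x).1]
          exact ((gen_sub hD _).2 _ hx).1
        · show e ((hC.mu.symm x).2) ∈ genCantorSubalgebra hD (e '' A)
          rw [(hom_lam hD hC he x).2]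
          exact ((gen_sub hD _).2 _ hx).2
    exact gen_min hC hsub
      (fun a ha => gen_subset hD _ (Set.mem_image_of_mem e ha)) hx
  · apply gen_min hD
    · constructor
      · rintro y1 ⟨x1, hx1, rfl⟩ y2 ⟨x2, hx2, rfl⟩
        exact ⟨hC.mu (x1, x2), (gen_sub hC A).1 _ hx1 _ hx2, he x1 x2⟩
      · rintro y ⟨x, hx, rfl⟩
        constructor
        · exact ⟨(hC.mu.symm x).1, ((gen_sub hC A).2 _ hx).1,
            (hom_lam hD hC he x).1⟩
        · exact ⟨(hC.mu.symm x).2, ((gen_sub hC A).2 _ hx).2,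
            (hom_lam hD hC he x).2⟩
    · exact Set.image_mono (gen_subset hC A)

lemma clone_image (he : IsCantorHom hC hD e) (he' : IsCantorHom hD hC e')
    (h1 : ∀ x, e' (e x) = x) (h2 : ∀ y, e (e' y) = y) (X : Set C)
    (hX : IsClone hC X) : IsClone hD (e '' X) := by
  obtain ⟨hsub, hne, hproper, F, hF, hXF⟩ := hX
  refine ⟨?_, hne.image e, ?_, e '' F, hF.image e, ?_⟩
  · constructor
    · rintro y1 ⟨x1, hx1, rfl⟩ y2 ⟨x2, hx2, rfl⟩
      exact ⟨hC.mu (x1, x2), hsub.1 _ hx1 _ hx2, he x1 x2⟩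
    · rintro y ⟨x, hx, rfl⟩
      exact ⟨⟨(hC.mu.symm x).1, (hsub.2 _ hx).1, (hom_lam hD hC he x).1⟩,
        ⟨(hC.mu.symm x).2, (hsub.2 _ hx).2, (hom_lam hD hC he x).2⟩⟩
  · intro hu
    apply hproper
    apply Set.eq_univ_of_forall
    intro x
    have : e x ∈ e '' X := hu ▸ Set.mem_univ (e x)
    obtain ⟨x', hx', hxx⟩ := this
    have : x' = x := by
      have := congrArg e' hxx
      rwa [h1, h1] at this
    exact this ▸ hx'
  · rw [hXF, gen_image hC hD e e' he he' h1 h2]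

lemma hom_comp {C1 C2 C3 : Type} {hC1 : CantorStr C1} {hC2 : CantorStr C2}
    {hC3 : CantorStr C3} {f : C1 → C2} {g : C2 → C3}
    (hf : IsCantorHom hC1 hC2 f) (hg : IsCantorHom hC2 hC3 g) :
    IsCantorHom hC1 hC3 (fun x => g (f x)) := fun a b => by
  show g (f (hC1.mu (a, b))) = _
  rw [hf a b, hg]

end Transfer

end CantorV

theorem clone_stabilizer_iso' {C : Type} (hC : CantorStr C) (c : C)
    (hfree : IsFreeCantorOn hC ![c]) (X : Set C) (hX : IsClone hC X) :
    Nonempty (↥(fixCantor hC X) ≃* ↥(cantorAut hC)) := by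
  classical
  obtain ⟨φ, ⟨hφhom, hφgen⟩, hφuniq⟩ := hfree CantorV.M CantorV.hM ![CantorV.idM]
  obtain ⟨ψ, ⟨hψhom, hψgen⟩, hψuniq⟩ := CantorV.M_free C hC ![c]
  have hφc : φ c = CantorV.idM := hφgen 0
  have hψid : ψ CantorV.idM = c := hψgen 0
  have hψφ : ∀ x, ψ (φ x) = x := by
    obtain ⟨ι, hι, hιuniq⟩ := hfree C hC ![c]
    have e1 : (fun x => ψ (φ x)) = ι := by
      apply hιuniq
      refine ⟨CantorV.hom_comp hφhom hψhom, fun i => ?_⟩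
      have : i = 0 := Subsingleton.elim i 0
      subst this
      show ψ (φ c) = c
      rw [hφc, hψid]
    have e2 : (fun x : C => x) = ι := by
      apply hιuniq
      exact ⟨fun a b => rfl, fun i => rfl⟩
    intro x
    exact congrFun (e1.trans e2.symm) x
  have hφψ : ∀ y, φ (ψ y) = y := by
    obtain ⟨ι, hι, hιuniq⟩ := CantorV.M_free CantorV.M CantorV.hM ![CantorV.idM]
    have e1 : (fun y => φ (ψ y)) = ι := by
      apply hιuniq
      refine ⟨CantorV.hom_comp hψhom hφhom, fun i => ?_⟩
      have : i = 0 := Subsingleton.elim i 0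
      subst this
      show φ (ψ CantorV.idM) = CantorV.idM
      rw [hψid, hφc]
    have e2 : (fun y : CantorV.M => y) = ι := by
      apply hιuniq
      exact ⟨fun a b => rfl, fun i => rfl⟩
    intro y
    exact congrFun (e1.trans e2.symm) y
  have hclone : IsClone CantorV.hM (φ '' X) :=
    CantorV.clone_image hC CantorV.hM φ ψ hφhom hψhom hψφ hφψ X hX
  obtain ⟨iso⟩ := CantorV.main_M (φ '' X) hclone
  exact ⟨((CantorV.fixTransfer hC CantorV.hM φ ψ X hφhom hψhom hψφ hφψ).trans iso).trans
    (CantorV.autTransfer hC CantorV.hM φ ψ hφhom hψhom hψφ hφψ).symm⟩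

/-- **Pointwise stabilizers of clones are copies of Thompson's group `V`**: for a clone
`X` of a Cantor algebra `C` free on one generator, the pointwise stabilizer `V(X)` is
isomorphic as a group to `Aut(C)`. -/
theorem clone_stabilizer_iso {C : Type} (hC : CantorStr C) (c : C)
    (hfree : IsFreeCantorOn hC ![c]) (X : Set C) (hX : IsClone hC X) :
    Nonempty (↥(fixCantor hC X) ≃* ↥(cantorAut hC)) :=
  clone_stabilizer_iso' hC c hfree X hX
end

section
/- Extension of isomorphisms on disjoint clones to a global automorphism (proof of Proposition 5.4): let C be a Cantor algebra free on one generator. Let X₁,…,X_k be pairwise disjoint clones of C whose union generates a proper subalgebra of C, let Y₁,…,Y_k be pairwise disjoint clones of C whose union generates a proper subalgebra of C, and for each j let φ_j : X_j → Y_j be a bijection satisfying φ_j(μ(x,y)) = μ(φ_j x, φ_j y) for all x, y ∈ X_j (an isomorphism of Cantor algebras between the subalgebras X_j and Y_j). Then there exists an automorphism v ∈ Aut(C) with v(x) = φ_j(x) for all j and all x ∈ X_j. -/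
open CategoryTheory


namespace CAx

/-- Cantor space. -/
abbrev Cnt := ℕ → Bool

def scons (b : Bool) (ξ : Cnt) : Cnt := fun n => match n with
  | 0 => b
  | n+1 => ξ n

def stail (ξ : Cnt) : Cnt := fun n => ξ (n+1)

@[simp] lemma scons_zero (b : Bool) (ξ : Cnt) : scons b ξ 0 = b := rfl
@[simp] lemma scons_succ (b : Bool) (ξ : Cnt) (n : ℕ) : scons b ξ (n+1) = ξ n := rfl
@[simp] lemma stail_scons (b : Bool) (ξ : Cnt) : stail (scons b ξ) = ξ := rfl

lemma scons_stail (ξ : Cnt) : scons (ξ 0) (stail ξ) = ξ := by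
  funext n; cases n <;> rfl

def app : List Bool → Cnt → Cnt
  | [], ξ => ξ
  | b :: w, ξ => scons b (app w ξ)

@[simp] lemma app_nil (ξ : Cnt) : app [] ξ = ξ := rfl
@[simp] lemma app_cons (b : Bool) (w : List Bool) (ξ : Cnt) :
    app (b :: w) ξ = scons b (app w ξ) := rfl

lemma app_append (w w' : List Bool) (ξ : Cnt) :
    app (w ++ w') ξ = app w (app w' ξ) := by
  induction w with
  | nil => rfl
  | cons b w ih => simp [ih]

lemma app_single (b : Bool) (ξ : Cnt) : app [b] ξ = scons b ξ := rfl

lemma app_eq_app {w w' : List Bool} {ξ ξ' : Cnt}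
    (h : app w ξ = app w' ξ') (hl : w.length ≤ w'.length) :
    ∃ t, w' = w ++ t ∧ ξ = app t ξ' := by
  induction w generalizing w' with
  | nil => exact ⟨w', rfl, h⟩
  | cons b w ih =>
    cases w' with
    | nil => simp at hl
    | cons b' w' =>
      have hb : b = b' := by
        have := congrFun h 0; simpa using this
      have htl : app w ξ = app w' ξ' := by
        have := congrArg stail h; simpa using this
      obtain ⟨t, rfl, hξ⟩ := ih htl (by simpa using hl)
      exact ⟨t, by simp [hb], hξ⟩

lemma app_left_inj {w : List Bool} {ξ ξ' : Cnt} (h : app w ξ = app w ξ') : ξ = ξ' := by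
  induction w with
  | nil => exact h
  | cons b w ih =>
    apply ih
    have := congrArg stail h; simpa using this

lemma app_fun_inj_le {w w' : List Bool} (h : ∀ ξ, app w ξ = app w' ξ)
    (hl : w.length ≤ w'.length) : w = w' := by
  obtain ⟨t, rfl, -⟩ := app_eq_app (h (fun _ => true)) hl
  have ht : ∀ ξ : Cnt, ξ = app t ξ := by
    intro ξ
    have := h ξ
    rw [app_append] at this
    exact app_left_inj this
  cases t with
  | nil => simp
  | cons b t =>
    have := congrFun (ht (fun _ => !b)) 0
    simp at this

lemma app_fun_inj {w w' : List Bool} (h : ∀ ξ, app w ξ = app w' ξ) : w = w' := by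
  rcases le_total w.length w'.length with hl | hl
  · exact app_fun_inj_le h hl
  · exact (app_fun_inj_le (fun ξ => (h ξ).symm) hl).symm

/-! ### Table maps -/

def smu (f g : Cnt → Cnt) : Cnt → Cnt := fun ζ => if ζ 0 then g (stail ζ) else f (stail ζ)

def sproj (b : Bool) (f : Cnt → Cnt) : Cnt → Cnt := fun ξ => f (scons b ξ)

def cw (w : List Bool) : Cnt → Cnt := fun ξ => app w ξ

@[simp] lemma smu_scons (f g : Cnt → Cnt) (b : Bool) (ξ : Cnt) :
    smu f g (scons b ξ) = if b then g ξ else f ξ := by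
  cases b <;> simp [smu]

@[simp] lemma sproj_smu_false (f g : Cnt → Cnt) : sproj false (smu f g) = f := by
  funext ξ; simp [sproj]

@[simp] lemma sproj_smu_true (f g : Cnt → Cnt) : sproj true (smu f g) = g := by
  funext ξ; simp [sproj]

lemma smu_sproj (f : Cnt → Cnt) : smu (sproj false f) (sproj true f) = f := by
  funext ζ
  have h := scons_stail ζ
  rcases hb : ζ 0 with _ | _ <;>
    · rw [hb] at h
      simp only [smu, sproj, hb, Bool.false_eq_true, if_true, if_false]
      rw [h]

lemma comp_smu (d f g : Cnt → Cnt) : d ∘ smu f g = smu (d ∘ f) (d ∘ g) := by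
  funext ζ
  rcases hb : ζ 0 with _ | _ <;> simp [smu, hb, Function.comp]

lemma smu_cw (w : List Bool) : smu (cw (w ++ [false])) (cw (w ++ [true])) = cw w := by
  funext ζ
  have h := scons_stail ζ
  rcases hb : ζ 0 with _ | _ <;>
    · rw [hb] at h
      simp only [smu, cw, hb, Bool.false_eq_true, if_true, if_false, app_append, app_single]
      rw [h]

lemma comp_cw_cons (f : Cnt → Cnt) (b : Bool) (u : List Bool) :
    f ∘ cw (b :: u) = sproj b f ∘ cw u := by
  funext ξ; simp [cw, sproj, Function.comp]

lemma comp_cw_concat (f : Cnt → Cnt) (b : Bool) (u : List Bool) :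
    f ∘ cw (u ++ [b]) = sproj b (f ∘ cw u) := by
  funext ξ; simp [cw, sproj, Function.comp, app_append, app_single]

def TableAt (n : ℕ) (f : Cnt → Cnt) : Prop :=
  ∀ u : List Bool, u.length = n → ∃ w, ∀ ξ, f (app u ξ) = app w ξ

def IsTable (f : Cnt → Cnt) : Prop := ∃ n, TableAt n f

lemma tableAt_cw (w : List Bool) : TableAt 0 (cw w) := by
  intro u hu
  rw [List.length_eq_zero_iff] at hu
  subst hu
  exact ⟨w, fun ξ => rfl⟩

lemma isTable_cw (w : List Bool) : IsTable (cw w) := ⟨0, tableAt_cw w⟩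

lemma isTable_id : IsTable (fun ξ => ξ) := isTable_cw []

lemma TableAt.succ {n : ℕ} {f : Cnt → Cnt} (h : TableAt n f) : TableAt (n+1) f := by
  intro u hu
  have hne : u ≠ [] := by intro h'; subst h'; simp at hu
  obtain ⟨w, hw⟩ := h u.dropLast (by simp [List.length_dropLast, hu])
  refine ⟨w ++ [u.getLast hne], fun ξ => ?_⟩
  conv_lhs => rw [← List.dropLast_append_getLast hne]
  rw [app_append, app_single, hw, app_append, app_single]

lemma TableAt.mono {n m : ℕ} {f : Cnt → Cnt} (h : TableAt n f) (hnm : n ≤ m) :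
    TableAt m f := by
  induction m with
  | zero => simpa [Nat.le_zero.mp hnm] using h
  | succ m ih =>
    rcases Nat.lt_or_ge n (m+1) with h' | h'
    · exact (ih (Nat.lt_succ_iff.mp h')).succ
    · simpa [Nat.le_antisymm hnm h'] using h

lemma TableAt.smu {n : ℕ} {f g : Cnt → Cnt} (hf : TableAt n f) (hg : TableAt n g) :
    TableAt (n+1) (smu f g) := by
  intro u hu
  cases u with
  | nil => simp at hu
  | cons b u =>
    rcases b with _ | _
    · obtain ⟨w, hw⟩ := hf u (by simpa using hu)
      exact ⟨w, fun ξ => by simp [hw]⟩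
    · obtain ⟨w, hw⟩ := hg u (by simpa using hu)
      exact ⟨w, fun ξ => by simp [hw]⟩

lemma IsTable.smu' {f g : Cnt → Cnt} (hf : IsTable f) (hg : IsTable g) :
    IsTable (smu f g) := by
  obtain ⟨n, hn⟩ := hf
  obtain ⟨m, hm⟩ := hg
  exact ⟨max n m + 1, (hn.mono (le_max_left _ _)).smu (hm.mono (le_max_right _ _))⟩

lemma TableAt.sproj {n : ℕ} {f : Cnt → Cnt} (h : TableAt (n+1) f) (b : Bool) :
    TableAt n (sproj b f) := by
  intro u hu
  obtain ⟨w, hw⟩ := h (b :: u) (by simp [hu])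
  exact ⟨w, fun ξ => by simpa [CAx.sproj] using hw ξ⟩

lemma IsTable.sproj' {f : Cnt → Cnt} (h : IsTable f) (b : Bool) : IsTable (sproj b f) := by
  obtain ⟨n, hn⟩ := h
  exact ⟨n, (hn.succ).sproj b⟩

/-- Structural induction for table maps. -/
lemma table_induction (P : (Cnt → Cnt) → Prop)
    (hcw : ∀ w, P (cw w)) (hmu : ∀ f g, P f → P g → P (smu f g)) :
    ∀ n f, TableAt n f → P f := by
  intro n
  induction n with
  | zero =>
    intro f hf
    obtain ⟨w, hw⟩ := hf [] rfl
    have : f = cw w := by funext ξ; exact hw ξ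
    rw [this]; exact hcw w
  | succ n ih =>
    intro f hf
    rw [← smu_sproj f]
    exact hmu _ _ (ih _ (hf.sproj false)) (ih _ (hf.sproj true))

lemma IsTable.comp_cw {f : Cnt → Cnt} (h : IsTable f) (w : List Bool) :
    IsTable (f ∘ cw w) := by
  induction w using List.reverseRecOn with
  | nil => simpa [cw, Function.comp_def] using h
  | append_singleton w b ih =>
    rw [comp_cw_concat]
    exact ih.sproj' b

lemma IsTable.comp {d f : Cnt → Cnt} (hd : IsTable d) (hf : IsTable f) :
    IsTable (d ∘ f) := by
  obtain ⟨n, hn⟩ := hf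
  revert hn
  refine table_induction (fun f => IsTable (d ∘ f)) (fun w => hd.comp_cw w) ?_ n f
  intro f g h1 h2
  rw [comp_smu]
  exact h1.smu' h2

lemma isTable_of_pieces {N : ℕ} {f : Cnt → Cnt}
    (h : ∀ u : List Bool, u.length = N → IsTable (f ∘ cw u)) : IsTable f := by
  induction N generalizing f with
  | zero => simpa [cw, Function.comp_def] using h [] rfl
  | succ N ih =>
    rw [← smu_sproj f]
    refine ((ih ?_).smu' (ih ?_)) <;>
      · intro u hu
        rw [← comp_cw_cons]
        exact h _ (by simp [hu])

/-! ### Words -/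

noncomputable def wrd (f : Cnt → Cnt) (u : List Bool) : List Bool :=
  Classical.epsilon (fun w => ∀ ξ, f (app u ξ) = app w ξ)

lemma wrd_spec {f : Cnt → Cnt} {u : List Bool} (h : ∃ w, ∀ ξ, f (app u ξ) = app w ξ) :
    ∀ ξ, f (app u ξ) = app (wrd f u) ξ :=
  Classical.epsilon_spec h

lemma wrd_eq {f : Cnt → Cnt} {u w : List Bool} (h : ∀ ξ, f (app u ξ) = app w ξ) :
    wrd f u = w := by
  have hex : ∃ w, ∀ ξ, f (app u ξ) = app w ξ := ⟨w, h⟩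
  exact app_fun_inj (fun ξ => ((wrd_spec hex ξ).symm.trans (h ξ)))

lemma wrd_sproj {n : ℕ} {f : Cnt → Cnt} (hf : TableAt (n+1) f) (b : Bool)
    {u : List Bool} (hu : u.length = n) : wrd (sproj b f) u = wrd f (b :: u) := by
  apply wrd_eq
  intro ξ
  have : sproj b f (app u ξ) = f (app (b :: u) ξ) := rfl
  rw [this]
  exact wrd_spec (hf (b :: u) (by simp [hu])) ξ

lemma wordBound : ∀ (n : ℕ) (f : Cnt → Cnt), TableAt n f →
    ∃ K, ∀ u : List Bool, u.length = n → (wrd f u).length ≤ K := by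
  intro n
  induction n with
  | zero =>
    intro f _
    refine ⟨(wrd f []).length, fun u hu => ?_⟩
    rw [List.length_eq_zero_iff] at hu
    subst hu; exact le_rfl
  | succ n ih =>
    intro f hf
    obtain ⟨K0, hK0⟩ := ih _ (hf.sproj false)
    obtain ⟨K1, hK1⟩ := ih _ (hf.sproj true)
    refine ⟨max K0 K1, fun u hu => ?_⟩
    cases u with
    | nil => simp at hu
    | cons b u =>
      rw [← wrd_sproj hf b (by simpa using hu)]
      rcases b with _ | _
      · exact le_trans (hK0 u (by simpa using hu)) (le_max_left _ _)
      · exact le_trans (hK1 u (by simpa using hu)) (le_max_right _ _)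

/-! ### firstn / sdrop -/

def firstn : ℕ → Cnt → List Bool
  | 0, _ => []
  | n+1, ξ => ξ 0 :: firstn n (stail ξ)

def sdrop : ℕ → Cnt → Cnt
  | 0, ξ => ξ
  | n+1, ξ => sdrop n (stail ξ)

@[simp] lemma length_firstn (n : ℕ) (ξ : Cnt) : (firstn n ξ).length = n := by
  induction n generalizing ξ with
  | zero => rfl
  | succ n ih => simp [firstn, ih]

lemma app_firstn_sdrop (n : ℕ) (ξ : Cnt) : app (firstn n ξ) (sdrop n ξ) = ξ := by
  induction n generalizing ξ with
  | zero => rfl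
  | succ n ih => simp [firstn, sdrop, ih, scons_stail]

lemma firstn_app {w : List Bool} {n : ℕ} (hn : w.length = n) (ξ : Cnt) :
    firstn n (app w ξ) = w := by
  induction w generalizing n with
  | nil => subst hn; rfl
  | cons b w ih =>
    subst hn
    simp [firstn, ih rfl]

lemma sdrop_app {w : List Bool} {n : ℕ} (hn : w.length = n) (ξ : Cnt) :
    sdrop n (app w ξ) = ξ := by
  induction w generalizing n with
  | nil => subst hn; rfl
  | cons b w ih =>
    subst hn
    simp [sdrop, ih rfl]

lemma firstn_congr {N m : ℕ} {ζ ζ' : Cnt} (h : firstn N ζ = firstn N ζ') (hm : m ≤ N) :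
    firstn m ζ = firstn m ζ' := by
  induction N generalizing m ζ ζ' with
  | zero => simpa [Nat.le_zero.mp hm]
  | succ N ih =>
    rcases m with _ | m
    · rfl
    · simp only [firstn] at h ⊢
      injection h with h0 h1
      rw [h0, ih h1 (Nat.succ_le_succ_iff.mp hm)]

/-! ### Ranges -/

lemma range_smu (f g : Cnt → Cnt) :
    Set.range (smu f g) = Set.range f ∪ Set.range g := by
  ext ζ
  constructor
  · rintro ⟨η, rfl⟩
    rcases hb : η 0 with _ | _
    · exact Or.inl ⟨stail η, by simp [smu, hb]⟩
    · exact Or.inr ⟨stail η, by simp [smu, hb]⟩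
  · rintro (⟨ξ, rfl⟩ | ⟨ξ, rfl⟩)
    · exact ⟨scons false ξ, by simp⟩
    · exact ⟨scons true ξ, by simp⟩

lemma range_sproj (b : Bool) (f : Cnt → Cnt) :
    Set.range (sproj b f) ⊆ Set.range f := by
  rintro ζ ⟨ξ, rfl⟩
  exact ⟨scons b ξ, rfl⟩

/-! ### allLists -/

def allLists : ℕ → List (List Bool)
  | 0 => [[]]
  | n+1 => ((allLists n).map (false :: ·)) ++ ((allLists n).map (true :: ·))

lemma mem_allLists {n : ℕ} {u : List Bool} : u ∈ allLists n ↔ u.length = n := by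
  induction n generalizing u with
  | zero => simp [allLists, List.length_eq_zero_iff]
  | succ n ih =>
    cases u with
    | nil => simp [allLists, ih]
    | cons b u =>
      simp only [allLists, List.mem_append, List.mem_map]
      rcases b with _ | _ <;> simp [ih]

lemma allLists_nodup (n : ℕ) : (allLists n).Nodup := by
  induction n with
  | zero => simp [allLists]
  | succ n ih =>
    refine List.Nodup.append ?_ ?_ ?_
    · exact ih.map (fun a b h => by simpa using h)
    · exact ih.map (fun a b h => by simpa using h)
    · intro u hu hv
      simp only [List.mem_map] at hu hv
      obtain ⟨a, _, rfl⟩ := hu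
      obtain ⟨b, _, h⟩ := hv
      simp at h

lemma le_foldr_max {l : List ℕ} {a : ℕ} (h : a ∈ l) : a ≤ l.foldr max 0 := by
  induction l with
  | nil => simp at h
  | cons b l ih =>
    rcases List.mem_cons.mp h with rfl | h
    · simp only [List.foldr]
      exact le_max_left _ _
    · simp only [List.foldr]
      exact le_trans (ih h) (le_max_right _ _)

end CAx

namespace CAx

/-! ### The concrete Cantor algebra of table maps -/

abbrev TT : Type := {f : Cnt → Cnt // IsTable f}

def hT : CantorStr TT where
  mu := {
    toFun := fun p => ⟨smu p.1.1 p.2.1, p.1.2.smu' p.2.2⟩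
    invFun := fun f => (⟨sproj false f.1, f.2.sproj' false⟩, ⟨sproj true f.1, f.2.sproj' true⟩)
    left_inv := by
      rintro ⟨⟨f, hf⟩, ⟨g, hg⟩⟩
      simp only [Prod.mk.injEq]
      constructor <;> apply Subtype.ext <;> simp
    right_inv := by
      rintro ⟨f, hf⟩
      apply Subtype.ext
      exact smu_sproj f }

@[simp] lemma hT_mu_val (f g : TT) : (hT.mu (f, g)).val = smu f.val g.val := rfl
@[simp] lemma hT_symm_fst (f : TT) : (hT.mu.symm f).1.val = sproj false f.val := rfl
@[simp] lemma hT_symm_snd (f : TT) : (hT.mu.symm f).2.val = sproj true f.val := rfl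

def cid : TT := ⟨fun ξ => ξ, isTable_id⟩

/-! ### Abstract helpers for a Cantor algebra -/

section Abstract

variable {X Y : Type} (hX : CantorStr X) (hY : CantorStr Y)

def proj (b : Bool) (x : X) : X := if b then (hX.mu.symm x).2 else (hX.mu.symm x).1

def wapp : List Bool → X → X
  | [], x => x
  | b :: w, x => wapp w (proj hX b x)

lemma mu_proj (x : X) : hX.mu (proj hX false x, proj hX true x) = x := by
  show hX.mu ((hX.mu.symm x).1, (hX.mu.symm x).2) = x
  rw [Prod.mk.eta, Equiv.apply_symm_apply]

lemma proj_mu (x y : X) (b : Bool) :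
    proj hX b (hX.mu (x, y)) = if b then y else x := by
  cases b <;> simp [proj, Equiv.symm_apply_apply]

lemma wapp_append (w w' : List Bool) (x : X) :
    wapp hX (w ++ w') x = wapp hX w' (wapp hX w x) := by
  induction w generalizing x with
  | nil => rfl
  | cons b w ih => simp [wapp, ih]

lemma wapp_concat (w : List Bool) (b : Bool) (x : X) :
    wapp hX (w ++ [b]) x = proj hX b (wapp hX w x) := by
  rw [wapp_append]; rfl

lemma subalg_proj {S : Set X} (hS : IsCantorSubalgebra hX S) {x : X} (hx : x ∈ S)
    (b : Bool) : proj hX b x ∈ S := by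
  cases b
  · exact (hS.2 x hx).1
  · exact (hS.2 x hx).2

lemma subalg_wapp {S : Set X} (hS : IsCantorSubalgebra hX S) {x : X} (hx : x ∈ S)
    (w : List Bool) : wapp hX w x ∈ S := by
  induction w generalizing x with
  | nil => exact hx
  | cons b w ih => exact ih (subalg_proj hX hS hx b)

variable {hX hY}

lemma hom_proj {f : X → Y} (hf : IsCantorHom hX hY f) (x : X) (b : Bool) :
    f (proj hX b x) = proj hY b (f x) := by
  have h1 : f x = hY.mu (f (proj hX false x), f (proj hX true x)) := by
    conv_lhs => rw [← mu_proj hX x]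
    exact hf _ _
  rw [h1]
  cases b <;> simp [proj_mu, proj]

lemma hom_wapp {f : X → Y} (hf : IsCantorHom hX hY f) (x : X) (w : List Bool) :
    f (wapp hX w x) = wapp hY w (f x) := by
  induction w generalizing x with
  | nil => rfl
  | cons b w ih => simp [wapp, ih, hom_proj hf]

lemma hom_comp {Z : Type} {hZ : CantorStr Z} {f : X → Y} {g : Y → Z}
    (hf : IsCantorHom hX hY f) (hg : IsCantorHom hY hZ g) :
    IsCantorHom hX hZ (g ∘ f) := by
  intro x y
  simp only [Function.comp]
  rw [hf x y, hg]

/-! ### Generated subalgebras -/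

lemma gen_subalg (A : Set X) : IsCantorSubalgebra hX (genCantorSubalgebra hX A) := by
  constructor
  · intro x hx y hy S hS
    exact hS.1.1 x (hx S hS) y (hy S hS)
  · intro x hx
    constructor <;> intro S hS
    · exact (hS.1.2 x (hx S hS)).1
    · exact (hS.1.2 x (hx S hS)).2

lemma subset_gen (A : Set X) : A ⊆ genCantorSubalgebra hX A :=
  fun x hx S hS => hS.2 hx

lemma gen_le {A S : Set X} (hS : IsCantorSubalgebra hX S) (h : A ⊆ S) :
    genCantorSubalgebra hX A ⊆ S :=
  fun x hx => hx S ⟨hS, h⟩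

lemma image_subalg {f : X → Y} (hf : IsCantorHom hX hY f) {S : Set X}
    (hS : IsCantorSubalgebra hX S) : IsCantorSubalgebra hY (f '' S) := by
  constructor
  · rintro _ ⟨x, hx, rfl⟩ _ ⟨y, hy, rfl⟩
    exact ⟨hX.mu (x, y), hS.1 x hx y hy, hf x y⟩
  · rintro _ ⟨x, hx, rfl⟩
    constructor
    · exact ⟨proj hX false x, (hS.2 x hx).1, hom_proj hf x false⟩
    · exact ⟨proj hX true x, (hS.2 x hx).2, hom_proj hf x true⟩

lemma preimage_subalg {f : X → Y} (hf : IsCantorHom hX hY f) {S : Set Y}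
    (hS : IsCantorSubalgebra hY S) : IsCantorSubalgebra hX (f ⁻¹' S) := by
  constructor
  · intro x hx y hy
    show f _ ∈ S
    rw [hf x y]
    exact hS.1 _ hx _ hy
  · intro x hx
    constructor
    · show f _ ∈ S
      have : f (hX.mu.symm x).1 = proj hY false (f x) := hom_proj hf x false
      rw [show (hX.mu.symm x).1 = proj hX false x from rfl, hom_proj hf x false]
      exact (hS.2 _ hx).1
    · show f _ ∈ S
      rw [show (hX.mu.symm x).2 = proj hX true x from rfl, hom_proj hf x true]
      exact (hS.2 _ hx).2

lemma image_gen {f : X → Y} (hf : IsCantorHom hX hY f) (A : Set X) :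
    f '' genCantorSubalgebra hX A = genCantorSubalgebra hY (f '' A) := by
  apply Set.Subset.antisymm
  · rw [Set.image_subset_iff]
    exact gen_le (preimage_subalg hf (gen_subalg _))
      (fun x hx => subset_gen _ ⟨x, hx, rfl⟩)
  · exact gen_le (image_subalg hf (gen_subalg _))
      (Set.image_mono (subset_gen A))

end Abstract

/-! ### TT-specific facts -/

@[simp] lemma proj_hT_val (b : Bool) (f : TT) : (proj hT b f).val = sproj b f.val := by
  cases b <;> rfl

lemma wapp_hT_val (w : List Bool) (f : TT) : (wapp hT w f).val = f.val ∘ cw w := by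
  induction w generalizing f with
  | nil => rfl
  | cons b w ih =>
    show (wapp hT w (proj hT b f)).val = _
    rw [ih, comp_cw_cons, proj_hT_val]

lemma subalg_univ_of_cid {S : Set TT} (hS : IsCantorSubalgebra hT S) (hc : cid ∈ S) :
    ∀ t : TT, t ∈ S := by
  have hcw : ∀ w, ∀ h, (⟨cw w, h⟩ : TT) ∈ S := by
    intro w
    induction w using List.reverseRecOn with
    | nil =>
      intro h
      have : (⟨cw [], h⟩ : TT) = cid := Subtype.ext (by funext ξ; rfl)
      rw [this]; exact hc
    | append_singleton w b ih =>
      intro h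
      have h1 : IsTable (cw w) := isTable_cw w
      have : (⟨cw (w ++ [b]), h⟩ : TT) = proj hT b ⟨cw w, h1⟩ := by
        apply Subtype.ext
        rw [proj_hT_val]
        show cw (w ++ [b]) = sproj b (cw w)
        have := comp_cw_concat (fun ξ => ξ) b w
        simpa [Function.comp_def] using this
      rw [this]
      exact subalg_proj hT hS (ih h1) b
  intro t
  obtain ⟨f, hf⟩ := t
  obtain ⟨n, hn⟩ := hf
  revert hn
  have := table_induction (fun f => ∀ hf : IsTable f, (⟨f, hf⟩ : TT) ∈ S)
    (fun w hw => hcw w hw) ?_ n f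
  · intro hn
    exact this hn _
  · intro f g h1 h2 hfg
    have hf : IsTable f := by
      have := hfg.sproj' false
      rwa [sproj_smu_false] at this
    have hg : IsTable g := by
      have := hfg.sproj' true
      rwa [sproj_smu_true] at this
    have : (⟨smu f g, hfg⟩ : TT) = hT.mu (⟨f, hf⟩, ⟨g, hg⟩) := Subtype.ext rfl
    rw [this]
    exact hS.1 _ (h1 hf) _ (h2 hg)

/-! ### The evaluation homomorphism `TT → C` -/

section Eval

variable {C : Type} (hC : CantorStr C) (c : C)

def mix : ℕ → (List Bool → C) → C
  | 0, t => t []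
  | n+1, t => hC.mu (mix n (fun u => t (false :: u)), mix n (fun u => t (true :: u)))

lemma mix_congr : ∀ (n : ℕ) (t t' : List Bool → C),
    (∀ u : List Bool, u.length = n → t u = t' u) → mix hC n t = mix hC n t' := by
  intro n
  induction n with
  | zero => intro t t' h; exact h [] rfl
  | succ n ih =>
    intro t t' h
    show hC.mu _ = hC.mu _
    congr 1
    refine Prod.ext ?_ ?_ <;> simp only
    · exact ih _ _ (fun u hu => h (false :: u) (by simp [hu]))
    · exact ih _ _ (fun u hu => h (true :: u) (by simp [hu]))

noncomputable def Gv (n : ℕ) (f : Cnt → Cnt) : C :=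
  mix hC n (fun u => wapp hC (wrd f u) c)

lemma Gv_succ {n : ℕ} {f : Cnt → Cnt} (hf : TableAt (n+1) f) :
    Gv hC c (n+1) f = hC.mu (Gv hC c n (sproj false f), Gv hC c n (sproj true f)) := by
  have e0 : Gv hC c (n+1) f = hC.mu (mix hC n (fun u => wapp hC (wrd f (false :: u)) c),
      mix hC n (fun u => wapp hC (wrd f (true :: u)) c)) := rfl
  rw [e0,
    mix_congr hC n (fun u => wapp hC (wrd f (false :: u)) c)
      (fun u => wapp hC (wrd (sproj false f) u) c)
      (fun u hu => by
        show wapp hC (wrd f (false :: u)) c = wapp hC (wrd (sproj false f) u) c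
        rw [wrd_sproj hf false hu]),
    mix_congr hC n (fun u => wapp hC (wrd f (true :: u)) c)
      (fun u => wapp hC (wrd (sproj true f) u) c)
      (fun u hu => by
        show wapp hC (wrd f (true :: u)) c = wapp hC (wrd (sproj true f) u) c
        rw [wrd_sproj hf true hu])]
  rfl

lemma Gv_cw : ∀ (m : ℕ) (w : List Bool), Gv hC c m (cw w) = wapp hC w c := by
  intro m
  induction m with
  | zero =>
    intro w
    show wapp hC (wrd (cw w) []) c = _
    rw [wrd_eq (fun ξ => rfl)]
  | succ m ih =>
    intro w
    rw [Gv_succ hC c ((tableAt_cw w).mono (Nat.zero_le _))]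
    have h1 : ∀ b, sproj b (cw w) = cw (w ++ [b]) := by
      intro b
      have := comp_cw_concat (fun ξ => ξ) b w
      simp only [Function.comp_def] at this
      exact this.symm
    rw [h1, h1, ih, ih, wapp_concat hC w false c, wapp_concat hC w true c]
    exact mu_proj hC (wapp hC w c)

lemma Gv_stable : ∀ (n : ℕ) (f : Cnt → Cnt), TableAt n f →
    ∀ m, n ≤ m → Gv hC c m f = Gv hC c n f := by
  intro n
  induction n with
  | zero =>
    intro f hf m _
    obtain ⟨w, hw⟩ := hf [] rfl
    have : f = cw w := funext (fun ξ => hw ξ)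
    subst this
    rw [Gv_cw, Gv_cw]
  | succ n ih =>
    intro f hf m hm
    rcases m with _ | m
    · omega
    have hm' : n ≤ m := Nat.succ_le_succ_iff.mp hm
    rw [Gv_succ hC c (hf.mono (Nat.succ_le_succ hm')), Gv_succ hC c hf,
      ih _ (hf.sproj false) m hm', ih _ (hf.sproj true) m hm']

noncomputable def gT : TT → C := fun f => Gv hC c f.2.choose f.1

lemma gT_eq {f : Cnt → Cnt} (hf : IsTable f) {n : ℕ} (hn : TableAt n f) :
    gT hC c ⟨f, hf⟩ = Gv hC c n f := by
  show Gv hC c hf.choose f = _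
  have h1 := Gv_stable hC c hf.choose f hf.choose_spec (max hf.choose n) (le_max_left _ _)
  have h2 := Gv_stable hC c n f hn (max hf.choose n) (le_max_right _ _)
  rw [← h1, h2]

lemma gT_hom : IsCantorHom hT hC (gT hC c) := by
  rintro ⟨f, hf⟩ ⟨g, hg⟩
  obtain ⟨n, hn⟩ := id hf
  obtain ⟨m, hm⟩ := id hg
  set N := max n m
  have hfN : TableAt N f := hn.mono (le_max_left _ _)
  have hgN : TableAt N g := hm.mono (le_max_right _ _)
  have hmuN : TableAt (N+1) (smu f g) := hfN.smu hgN
  have hmu : IsTable (smu f g) := ⟨N+1, hmuN⟩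
  have he : hT.mu (⟨f, hf⟩, ⟨g, hg⟩) = (⟨smu f g, hmu⟩ : TT) := Subtype.ext rfl
  rw [he, gT_eq hC c hmu hmuN, gT_eq hC c hf hfN, gT_eq hC c hg hgN, Gv_succ hC c hmuN,
    sproj_smu_false, sproj_smu_true]

lemma gT_cid : gT hC c cid = c := by
  show gT hC c ⟨fun ξ => ξ, isTable_id⟩ = c
  rw [gT_eq hC c isTable_id (show TableAt 0 (fun ξ => ξ) from tableAt_cw [])]
  show wapp hC (wrd _ []) c = c
  rw [wrd_eq (fun ξ => rfl)]
  rfl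

end Eval

/-! ### Consequences of freeness: `C ≃ TT` -/

lemma free_to_TT {C : Type} (hC : CantorStr C) (c : C) (hfree : IsFreeCantorOn hC ![c]) :
    ∃ h : C → TT, IsCantorHom hC hT h ∧ Function.Bijective h := by
  obtain ⟨h, ⟨hhom, hgen⟩, _⟩ := hfree TT hT ![cid]
  have hc0 : (![c] : Fin 1 → C) 0 = c := rfl
  have hcid0 : (![cid] : Fin 1 → TT) 0 = cid := rfl
  have hgenc : h c = cid := by rw [← hc0, hgen 0, hcid0]
  refine ⟨h, hhom, ?_, ?_⟩
  · -- injective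
    obtain ⟨f₀, _, huniq₀⟩ := hfree C hC ![c]
    have h1 : gT hC c ∘ h = f₀ := by
      apply huniq₀
      refine ⟨hom_comp hhom (gT_hom hC c), fun i => ?_⟩
      rw [Subsingleton.elim i 0, hc0]
      show gT hC c (h c) = c
      rw [hgenc, gT_cid]
    have h2 : (fun a : C => a) = f₀ := by
      apply huniq₀
      exact ⟨fun x y => rfl, fun i => rfl⟩
    intro a b hab
    have := congrFun (h1.trans h2.symm)
    have ha := this a
    have hb := this b
    simp only [Function.comp] at ha hb
    rw [← ha, ← hb, hab]
  · -- surjective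
    have hrange : IsCantorSubalgebra hT (Set.range h) := by
      constructor
      · rintro _ ⟨a, rfl⟩ _ ⟨b, rfl⟩
        exact ⟨hC.mu (a, b), hhom a b⟩
      · rintro _ ⟨a, rfl⟩
        constructor
        · exact ⟨proj hC false a, hom_proj hhom a false⟩
        · exact ⟨proj hC true a, hom_proj hhom a true⟩
    intro t
    exact subalg_univ_of_cid hrange ⟨c, hgenc⟩ t

/-! ### Side data: ranges of a family of f.g. subalgebras -/

def DD {k : ℕ} (A : Fin k → Set TT) : Set Cnt :=
  {ζ | ∃ (j : Fin k) (x : TT), x ∈ A j ∧ ∃ ξ, x.val ξ = ζ}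

def zs : Cnt := fun _ => false

lemma mem_DD {k : ℕ} (A : Fin k → Set TT) {j : Fin k} {x : TT} (hx : x ∈ A j) (ξ : Cnt) :
    x.val ξ ∈ DD A := ⟨j, x, hx, ξ, rfl⟩

lemma side {k : ℕ} (A : Fin k → Set TT)
    (hsub : ∀ j, IsCantorSubalgebra hT (A j))
    (hfg : ∀ j, ∃ F : Set TT, F.Finite ∧ A j = genCantorSubalgebra hT F)
    (hprop : genCantorSubalgebra hT (⋃ j, A j) ≠ Set.univ) :
    ∃ N₀ : ℕ, (∃ ζ, ζ ∉ DD A) ∧ ∀ N, N₀ ≤ N →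
      (∀ ζ ζ', firstn N ζ = firstn N ζ' → ζ ∈ DD A → ζ' ∈ DD A) ∧
      (∀ u : List Bool, u.length = N → app u zs ∈ DD A →
        ∃ (j : Fin k) (z : TT), z ∈ A j ∧ z.val = cw u) := by
  choose F hFfin hFgen using hfg
  have hFsub : ∀ j, F j ⊆ A j := fun j => (hFgen j) ▸ subset_gen (F j)
  have hcover : ∀ j, ∀ x ∈ A j, ∀ ζ ∈ Set.range x.val, ∃ f ∈ F j, ζ ∈ Set.range f.val := by
    intro j
    have hsubalg : IsCantorSubalgebra hT
        {x : TT | ∀ ζ ∈ Set.range x.val, ∃ f ∈ F j, ζ ∈ Set.range f.val} := by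
      constructor
      · rintro x hx y hy ζ hζ
        have : (hT.mu (x, y)).val = smu x.val y.val := rfl
        rw [this, range_smu] at hζ
        rcases hζ with hζ | hζ
        · exact hx ζ hζ
        · exact hy ζ hζ
      · intro x hx
        constructor <;> intro ζ hζ
        · exact hx ζ (range_sproj false x.val (by rwa [hT_symm_fst] at hζ))
        · exact hx ζ (range_sproj true x.val (by rwa [hT_symm_snd] at hζ))
    intro x hx
    have hsubset : A j ⊆ {x : TT | ∀ ζ ∈ Set.range x.val, ∃ f ∈ F j, ζ ∈ Set.range f.val} := by
      rw [hFgen j]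
      exact gen_le hsubalg (fun f hf ζ hζ => ⟨f, hf, hζ⟩)
    exact hsubset hx
  have pack : ∀ f : TT, ∃ nK : ℕ × ℕ, TableAt nK.1 f.val ∧
      ∀ u : List Bool, u.length = nK.1 → (wrd f.val u).length ≤ nK.2 := by
    intro f
    obtain ⟨n, hn⟩ := f.2
    obtain ⟨K, hK⟩ := wordBound n f.val hn
    exact ⟨(n, K), hn, hK⟩
  choose nK hTab hBound using pack
  have hUfin : (⋃ j, F j).Finite := Set.finite_iUnion hFfin
  classical
  set L : List TT := hUfin.toFinset.toList with hL
  have hmemL : ∀ {j : Fin k} {f : TT}, f ∈ F j → f ∈ L := by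
    intro j f hf
    rw [hL, Finset.mem_toList, Set.Finite.mem_toFinset]
    exact Set.mem_iUnion.mpr ⟨j, hf⟩
  set N₀ : ℕ := (L.map (fun f => max (nK f).1 (nK f).2)).foldr max 0 with hN₀
  have hKbound : ∀ {j : Fin k} {f : TT}, f ∈ F j → (nK f).2 ≤ N₀ := by
    intro j f hf
    exact le_trans (le_max_right _ _) (le_foldr_max (List.mem_map_of_mem (hmemL hf)))
  -- extraction of a bounded word description of a point of DD A
  have extract : ∀ ζ ∈ DD A, ∃ (j : Fin k) (f : TT) (v w : List Bool) (ψ : Cnt),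
      f ∈ F j ∧ (∀ χ, f.val (app v χ) = app w χ) ∧ w.length ≤ N₀ ∧ ζ = app w ψ := by
    rintro ζ ⟨j, x, hx, ξ, rfl⟩
    obtain ⟨f, hf, hζf⟩ := hcover j x hx _ ⟨ξ, rfl⟩
    obtain ⟨ξ', hξ'⟩ := hζf
    set n := (nK f).1
    set v := firstn n ξ'
    set ψ := sdrop n ξ'
    have hw := wrd_spec (hTab f v (length_firstn n ξ'))
    refine ⟨j, f, v, wrd f.val v, ψ, hf, hw,
      le_trans (hBound f v (length_firstn n ξ')) (hKbound hf), ?_⟩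
    rw [← hξ', ← hw ψ]
    exact congrArg f.val (app_firstn_sdrop n ξ').symm
  -- piece property, for any N ≥ N₀
  have piece : ∀ N, N₀ ≤ N → ∀ u : List Bool, u.length = N → app u zs ∈ DD A →
      ∃ (j : Fin k) (z : TT), z ∈ A j ∧ z.val = cw u := by
    intro N hN u hu hmem
    obtain ⟨j, f, v, w, ψ, hf, hw, hwlen, heq⟩ := extract _ hmem
    obtain ⟨t, rfl, -⟩ := app_eq_app heq.symm (by omega)
    refine ⟨j, wapp hT (v ++ t) f, subalg_wapp hT (hsub j) (hFsub j hf) _, ?_⟩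
    rw [wapp_hT_val]
    funext χ
    show f.val (app (v ++ t) χ) = app (w ++ t) χ
    rw [app_append, hw, ← app_append]
  -- cylinder stability for any N ≥ N₀
  have cyl : ∀ N, N₀ ≤ N → ∀ ζ ζ', firstn N ζ = firstn N ζ' → ζ ∈ DD A → ζ' ∈ DD A := by
    intro N hN ζ ζ' hagree hmem
    obtain ⟨j, f, v, w, ψ, hf, hw, hwlen, rfl⟩ := extract _ hmem
    have h1 : firstn w.length ζ' = w := by
      rw [← firstn_congr hagree (le_trans hwlen hN)]
      exact firstn_app rfl ψ
    have h2 : ζ' = app w (sdrop w.length ζ') := by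
      conv_lhs => rw [← app_firstn_sdrop w.length ζ']
      rw [h1]
    rw [h2, ← hw (sdrop w.length ζ')]
    exact mem_DD A (hFsub j hf) _
  refine ⟨N₀, ?_, fun N hN => ⟨cyl N hN, piece N hN⟩⟩
  -- properness gives a point outside DD A
  by_contra hDD
  push_neg at hDD
  apply hprop
  have hSsub := gen_subalg (hX := hT) (⋃ j, A j)
  have hcwS : ∀ u : List Bool, u.length = N₀ →
      (⟨cw u, isTable_cw u⟩ : TT) ∈ genCantorSubalgebra hT (⋃ j, A j) := by
    intro u hu
    obtain ⟨j, z, hz, hzval⟩ := piece N₀ le_rfl u hu (hDD _)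
    have : (⟨cw u, isTable_cw u⟩ : TT) = z := Subtype.ext hzval.symm
    rw [this]
    exact subset_gen _ (Set.mem_iUnion.mpr ⟨j, hz⟩)
  have down : ∀ (i : ℕ) (u : List Bool), u.length + i = N₀ →
      (⟨cw u, isTable_cw u⟩ : TT) ∈ genCantorSubalgebra hT (⋃ j, A j) := by
    intro i
    induction i with
    | zero => intro u hu; exact hcwS u (by omega)
    | succ i ih =>
      intro u hu
      have h0 := ih (u ++ [false]) (by simp; omega)
      have h1 := ih (u ++ [true]) (by simp; omega)
      have hmem := hSsub.1 _ h0 _ h1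
      have : hT.mu (⟨cw (u ++ [false]), isTable_cw _⟩, ⟨cw (u ++ [true]), isTable_cw _⟩)
          = (⟨cw u, isTable_cw u⟩ : TT) := Subtype.ext (smu_cw u)
      rwa [this] at hmem
  have hcid : cid ∈ genCantorSubalgebra hT (⋃ j, A j) := by
    have := down N₀ [] (by simp)
    have he : (⟨cw [], isTable_cw []⟩ : TT) = cid := Subtype.ext rfl
    rwa [he] at this
  exact Set.eq_univ_of_forall (subalg_univ_of_cid hSsub hcid)

/-! ### The partial map induced by the isomorphisms -/

lemma exists_d0 {k : ℕ} (A : Fin k → Set TT) (φ : Fin k → TT → TT)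
    (hsub : ∀ j, IsCantorSubalgebra hT (A j))
    (hdisj : ∀ i j, i ≠ j → A i ∩ A j = ∅)
    (hhom : ∀ j, ∀ x ∈ A j, ∀ y ∈ A j, φ j (hT.mu (x, y)) = hT.mu (φ j x, φ j y)) :
    ∃ d0 : Cnt → Cnt, ∀ j, ∀ x ∈ A j, ∀ ξ, d0 (x.val ξ) = (φ j x).val ξ := by
  classical
  -- φ commutes with proj and wapp on A j
  have φproj : ∀ j, ∀ x ∈ A j, ∀ b, φ j (proj hT b x) = proj hT b (φ j x) := by
    intro j x hx b
    have hp0 : proj hT false x ∈ A j := subalg_proj hT (hsub j) hx false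
    have hp1 : proj hT true x ∈ A j := subalg_proj hT (hsub j) hx true
    have hmu : φ j x = hT.mu (φ j (proj hT false x), φ j (proj hT true x)) := by
      conv_lhs => rw [← mu_proj hT x]
      exact hhom j _ hp0 _ hp1
    rw [hmu, proj_mu]
    cases b <;> simp
  have φwapp : ∀ j, ∀ x ∈ A j, ∀ w, φ j (wapp hT w x) = wapp hT w (φ j x) := by
    intro j x hx w
    induction w generalizing x with
    | nil => rfl
    | cons b w ih =>
      show φ j (wapp hT w (proj hT b x)) = wapp hT w (proj hT b (φ j x))
      rw [ih _ (subalg_proj hT (hsub j) hx b), φproj j x hx b]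
  -- asymmetric half of well-definedness
  have half : ∀ (j j' : Fin k) (x x' : TT), x ∈ A j → x' ∈ A j' →
      ∀ (v v' w w' : List Bool) (ψ ψ' : Cnt),
      (∀ χ, x.val (app v χ) = app w χ) → (∀ χ, x'.val (app v' χ) = app w' χ) →
      w.length ≤ w'.length → app w ψ = app w' ψ' →
      (φ j x).val (app v ψ) = (φ j' x').val (app v' ψ') := by
    intro j j' x x' hx hx' v v' w w' ψ ψ' hw hw' hlen heq
    obtain ⟨t, rfl, hψ⟩ := app_eq_app heq hlen
    have hz : wapp hT (v ++ t) x = wapp hT v' x' := by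
      apply Subtype.ext
      rw [wapp_hT_val, wapp_hT_val]
      funext χ
      show x.val (app (v ++ t) χ) = x'.val (app v' χ)
      rw [app_append, hw, ← app_append, hw']
    have hzA : wapp hT (v ++ t) x ∈ A j := subalg_wapp hT (hsub j) hx _
    have hzA' : wapp hT v' x' ∈ A j' := subalg_wapp hT (hsub j') hx' _
    rcases eq_or_ne j j' with rfl | hne
    · have e1 : (φ j x).val (app v ψ) = (φ j x).val (app (v ++ t) ψ') := by
        rw [hψ, app_append]
      have e2 : (φ j x).val (app (v ++ t) ψ') = (wapp hT (v ++ t) (φ j x)).val ψ' := by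
        rw [wapp_hT_val]; rfl
      have e3 : (wapp hT (v ++ t) (φ j x)) = wapp hT v' (φ j x') := by
        rw [← φwapp j x hx, ← φwapp j x' hx', hz]
      have e4 : (wapp hT v' (φ j x')).val ψ' = (φ j x').val (app v' ψ') := by
        rw [wapp_hT_val]; rfl
      rw [e1, e2, e3, e4]
    · exfalso
      have : wapp hT (v ++ t) x ∈ A j ∩ A j' := ⟨hzA, hz ▸ hzA'⟩
      rw [hdisj j j' hne] at this
      exact this
  -- well-definedness
  have WD : ∀ (j j' : Fin k) (x x' : TT), x ∈ A j → x' ∈ A j' → ∀ (ξ ξ' : Cnt),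
      x.val ξ = x'.val ξ' → (φ j x).val ξ = (φ j' x').val ξ' := by
    intro j j' x x' hx hx' ξ ξ' heq
    obtain ⟨n, hn⟩ := x.2
    obtain ⟨n', hn'⟩ := x'.2
    have hw := wrd_spec (hn (firstn n ξ) (length_firstn n ξ))
    have hw' := wrd_spec (hn' (firstn n' ξ') (length_firstn n' ξ'))
    have hξ : ξ = app (firstn n ξ) (sdrop n ξ) := (app_firstn_sdrop n ξ).symm
    have hξ' : ξ' = app (firstn n' ξ') (sdrop n' ξ') := (app_firstn_sdrop n' ξ').symm
    have heq' : app (wrd x.val (firstn n ξ)) (sdrop n ξ)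
        = app (wrd x'.val (firstn n' ξ')) (sdrop n' ξ') := by
      rw [← hw, ← hw', ← hξ, ← hξ', heq]
    rcases le_total (wrd x.val (firstn n ξ)).length (wrd x'.val (firstn n' ξ')).length
        with hle | hle
    · have := half j j' x x' hx hx' _ _ _ _ _ _ hw hw' hle heq'
      rwa [← hξ, ← hξ'] at this
    · have := half j' j x' x hx' hx _ _ _ _ _ _ hw' hw hle heq'.symm
      rw [← hξ, ← hξ'] at this
      exact this.symm
  refine ⟨fun ζ => if h : ζ ∈ DD A then
      (φ h.choose h.choose_spec.choose).val h.choose_spec.choose_spec.2.choose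
    else ζ, ?_⟩
  intro j x hx ξ
  have hmem : x.val ξ ∈ DD A := mem_DD A hx ξ
  beta_reduce
  rw [dif_pos hmem]
  exact WD _ j _ x hmem.choose_spec.choose_spec.1 hx _ ξ
    hmem.choose_spec.choose_spec.2.choose_spec

/-! ### Table bijection between Cantor space and a nonempty union of depth-N cylinders -/

lemma one (N : ℕ) : ∀ (L : List (List Bool)), L ≠ [] → L.Nodup →
    (∀ u ∈ L, u.length = N) →
    ∃ p q : Cnt → Cnt, (∀ ζ, firstn N (p ζ) ∈ L) ∧ (∀ ζ, q (p ζ) = ζ) ∧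
      (∀ η, firstn N η ∈ L → p (q η) = η) ∧ IsTable p ∧
      (∀ v ∈ L, IsTable (q ∘ cw v)) := by
  intro L
  induction L with
  | nil => intro h; exact absurd rfl h
  | cons u L ih =>
    intro _ hnodup hlen
    have hu : u.length = N := hlen u (List.mem_cons_self)
    rcases eq_or_ne L [] with rfl | hL
    · -- single cylinder
      refine ⟨cw u, fun η => sdrop N η, ?_, ?_, ?_, isTable_cw u, ?_⟩
      · intro ζ
        rw [show firstn N (cw u ζ) = u from firstn_app hu ζ]
        exact List.mem_cons_self
      · intro ζ; exact sdrop_app hu ζ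
      · intro η hη
        have : firstn N η = u := by simpa using hη
        show app u (sdrop N η) = η
        conv_rhs => rw [← app_firstn_sdrop N η]
        rw [this]
      · intro v hv
        have : v = u := by simpa using hv
        subst this
        have he : (fun η => sdrop N η) ∘ cw v = fun ξ => ξ := by
          funext ξ; exact sdrop_app (hlen v (List.mem_cons_self)) ξ
        rw [he]
        exact isTable_id
    · -- at least two cylinders
      obtain ⟨p', q', hp'1, hq'p, hp'q, hp'tab, hq'tab⟩ :=
        ih hL hnodup.of_cons (fun v hv => hlen v (List.mem_cons_of_mem u hv))
      have huL : u ∉ L := (List.nodup_cons.mp hnodup).1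
      classical
      refine ⟨smu (cw u) p',
        fun η => if firstn N η = u then scons false (sdrop N η) else scons true (q' η),
        ?_, ?_, ?_, (isTable_cw u).smu' hp'tab, ?_⟩
      · intro ζ
        rcases hb : ζ 0 with _ | _
        · have : smu (cw u) p' ζ = app u (stail ζ) := by simp [smu, hb, cw]
          rw [this, firstn_app hu]
          exact List.mem_cons_self
        · have : smu (cw u) p' ζ = p' (stail ζ) := by simp [smu, hb]
          rw [this]
          exact List.mem_cons_of_mem u (hp'1 (stail ζ))
      · intro ζ
        rcases hb : ζ 0 with _ | _
        · have h1 : smu (cw u) p' ζ = app u (stail ζ) := by simp [smu, hb, cw]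
          rw [h1]
          beta_reduce
          rw [if_pos (firstn_app hu (stail ζ)), sdrop_app hu]
          rw [← hb, scons_stail]
        · have h1 : smu (cw u) p' ζ = p' (stail ζ) := by simp [smu, hb]
          have h2 : firstn N (p' (stail ζ)) ≠ u := by
            intro hc
            exact huL (hc ▸ hp'1 (stail ζ))
          rw [h1]
          beta_reduce
          rw [if_neg h2, hq'p]
          rw [← hb, scons_stail]
      · intro η hη
        rcases eq_or_ne (firstn N η) u with hequ | hnequ
        · beta_reduce
          rw [if_pos hequ]
          have : smu (cw u) p' (scons false (sdrop N η)) = app u (sdrop N η) := by simp [smu, cw]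
          rw [this, ← hequ, app_firstn_sdrop]
        · beta_reduce
          rw [if_neg hnequ]
          have : smu (cw u) p' (scons true (q' η)) = p' (q' η) := by simp [smu]
          rw [this]
          apply hp'q
          rcases List.mem_cons.mp hη with h | h
          · exact absurd h hnequ
          · exact h
      · intro v hv
        rcases List.mem_cons.mp hv with rfl | hvL
        · have he : (fun η => if firstn N η = v then scons false (sdrop N η)
              else scons true (q' η)) ∘ cw v = cw [false] := by
            funext ξ
            show (if firstn N (app v ξ) = v then scons false (sdrop N (app v ξ))
              else scons true (q' (app v ξ))) = app [false] ξ
            rw [if_pos (firstn_app hu ξ), sdrop_app hu ξ, app_single]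
          rw [he]
          exact isTable_cw [false]
        · have hvne : v ≠ u := by rintro rfl; exact huL hvL
          have he : (fun η => if firstn N η = u then scons false (sdrop N η)
              else scons true (q' η)) ∘ cw v = cw [true] ∘ (q' ∘ cw v) := by
            funext ξ
            show (if firstn N (app v ξ) = u then scons false (sdrop N (app v ξ))
              else scons true (q' (app v ξ))) = app [true] (q' (app v ξ))
            rw [if_neg (by rw [firstn_app (hlen v hv) ξ]; exact hvne), app_single]
          rw [he]
          exact (isTable_cw [true]).comp (hq'tab v hvL)

/-! ### Main theorem, concrete version -/

theorem concrete_main {k : ℕ} (A B : Fin k → Set TT)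
    (hsubA : ∀ j, IsCantorSubalgebra hT (A j)) (hsubB : ∀ j, IsCantorSubalgebra hT (B j))
    (hfgA : ∀ j, ∃ F : Set TT, F.Finite ∧ A j = genCantorSubalgebra hT F)
    (hfgB : ∀ j, ∃ F : Set TT, F.Finite ∧ B j = genCantorSubalgebra hT F)
    (hdA : ∀ i j, i ≠ j → A i ∩ A j = ∅) (hdB : ∀ i j, i ≠ j → B i ∩ B j = ∅)
    (hpA : genCantorSubalgebra hT (⋃ j, A j) ≠ Set.univ)
    (hpB : genCantorSubalgebra hT (⋃ j, B j) ≠ Set.univ)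
    (φ : Fin k → TT → TT) (hbij : ∀ j, Set.BijOn (φ j) (A j) (B j))
    (hhom : ∀ j, ∀ x ∈ A j, ∀ y ∈ A j, φ j (hT.mu (x, y)) = hT.mu (φ j x, φ j y)) :
    ∃ v : Equiv.Perm TT, IsCantorHom hT hT ⇑v ∧ ∀ j, ∀ x ∈ A j, v x = φ j x := by
  classical
  haveI : Nonempty TT := ⟨cid⟩
  set ψ : Fin k → TT → TT := fun j => Function.invFunOn (φ j) (A j) with hψdef
  have hinv : ∀ j, Set.InvOn (ψ j) (φ j) (A j) (B j) := fun j => (hbij j).invOn_invFunOn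
  have hψφ : ∀ j, ∀ x ∈ A j, ψ j (φ j x) = x := fun j => (hinv j).1
  have hφψ : ∀ j, ∀ y ∈ B j, φ j (ψ j y) = y := fun j => (hinv j).2
  have hψmaps : ∀ j, Set.MapsTo (ψ j) (B j) (A j) := by
    intro j y hy
    obtain ⟨x, hx, rfl⟩ := (hbij j).surjOn hy
    rw [hψφ j x hx]
    exact hx
  have hψhom : ∀ j, ∀ y ∈ B j, ∀ y' ∈ B j, ψ j (hT.mu (y, y')) = hT.mu (ψ j y, ψ j y') := by
    intro j y hy y' hy'
    have hx : ψ j y ∈ A j := hψmaps j hy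
    have hx' : ψ j y' ∈ A j := hψmaps j hy'
    have h1 : φ j (hT.mu (ψ j y, ψ j y')) = hT.mu (y, y') := by
      rw [hhom j _ hx _ hx', hφψ j y hy, hφψ j y' hy']
    rw [← h1, hψφ j _ ((hsubA j).1 _ hx _ hx')]
  obtain ⟨d0, hd0⟩ := exists_d0 A φ hsubA hdA hhom
  obtain ⟨e0, he0⟩ := exists_d0 B ψ hsubB hdB hψhom
  obtain ⟨NA, ⟨ζA, hζA⟩, hsideA⟩ := side A hsubA hfgA hpA
  obtain ⟨NB, ⟨ζB, hζB⟩, hsideB⟩ := side B hsubB hfgB hpB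
  set N := max NA NB with hN
  obtain ⟨cylA, pieceA⟩ := hsideA N (le_max_left _ _)
  obtain ⟨cylB, pieceB⟩ := hsideB N (le_max_right _ _)
  have hDE : ∀ ζ ∈ DD A, d0 ζ ∈ DD B ∧ e0 (d0 ζ) = ζ := by
    rintro ζ ⟨j, x, hx, ξ, rfl⟩
    have h1 : d0 (x.val ξ) = (φ j x).val ξ := hd0 j x hx ξ
    have hφx : φ j x ∈ B j := (hbij j).mapsTo hx
    constructor
    · rw [h1]; exact mem_DD B hφx ξ
    · rw [h1, he0 j _ hφx ξ, hψφ j x hx]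
  have hED : ∀ η ∈ DD B, e0 η ∈ DD A ∧ d0 (e0 η) = η := by
    rintro η ⟨j, y, hy, ξ, rfl⟩
    have h1 : e0 (y.val ξ) = (ψ j y).val ξ := he0 j y hy ξ
    have hψy : ψ j y ∈ A j := hψmaps j hy
    constructor
    · rw [h1]; exact mem_DD A hψy ξ
    · rw [h1, hd0 j _ hψy ξ, hφψ j y hy]
  -- complement cylinder lists
  set LA : List (List Bool) := (allLists N).filter (fun u => decide (app u zs ∉ DD A)) with hLA
  set LB : List (List Bool) := (allLists N).filter (fun u => decide (app u zs ∉ DD B)) with hLB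
  have hLAmem : ∀ u, u ∈ LA ↔ (u.length = N ∧ app u zs ∉ DD A) := by
    intro u
    rw [hLA, List.mem_filter, mem_allLists]
    simp
  have hLBmem : ∀ u, u ∈ LB ↔ (u.length = N ∧ app u zs ∉ DD B) := by
    intro u
    rw [hLB, List.mem_filter, mem_allLists]
    simp
  have hnotDA : ∀ ζ, ζ ∉ DD A ↔ firstn N ζ ∈ LA := by
    intro ζ
    constructor
    · intro h
      rw [hLAmem]
      refine ⟨length_firstn N ζ, fun hc => h ?_⟩
      exact cylA _ _ (firstn_app (length_firstn N ζ) zs) hc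
    · intro h hmem
      rw [hLAmem] at h
      exact h.2 (cylA ζ _ (firstn_app (length_firstn N ζ) zs).symm hmem)
  have hnotDB : ∀ ζ, ζ ∉ DD B ↔ firstn N ζ ∈ LB := by
    intro ζ
    constructor
    · intro h
      rw [hLBmem]
      refine ⟨length_firstn N ζ, fun hc => h ?_⟩
      exact cylB _ _ (firstn_app (length_firstn N ζ) zs) hc
    · intro h hmem
      rw [hLBmem] at h
      exact h.2 (cylB ζ _ (firstn_app (length_firstn N ζ) zs).symm hmem)
  have hLAne : LA ≠ [] := by
    intro hnil
    have := (hnotDA ζA).mp hζA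
    rw [hnil] at this
    simp at this
  have hLBne : LB ≠ [] := by
    intro hnil
    have := (hnotDB ζB).mp hζB
    rw [hnil] at this
    simp at this
  have hLAlen : ∀ u ∈ LA, u.length = N := fun u hu => ((hLAmem u).mp hu).1
  have hLBlen : ∀ u ∈ LB, u.length = N := fun u hu => ((hLBmem u).mp hu).1
  have hLAnodup : LA.Nodup := (allLists_nodup N).filter _
  have hLBnodup : LB.Nodup := (allLists_nodup N).filter _
  obtain ⟨pA, qA, hpA1, hqpA, hpqA, hpAtab, hqAtab⟩ := one N LA hLAne hLAnodup hLAlen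
  obtain ⟨pB, qB, hpB1, hqpB, hpqB, hpBtab, hqBtab⟩ := one N LB hLBne hLBnodup hLBlen
  set dd : Cnt → Cnt := fun ζ => if ζ ∈ DD A then d0 ζ else pB (qA ζ) with hdd
  set ee : Cnt → Cnt := fun η => if η ∈ DD B then e0 η else pA (qB η) with hee
  have hed : ∀ ζ, ee (dd ζ) = ζ := by
    intro ζ
    by_cases h : ζ ∈ DD A
    · obtain ⟨h1, h2⟩ := hDE ζ h
      rw [hdd]
      beta_reduce
      rw [if_pos h]
      rw [hee]
      beta_reduce
      rw [if_pos h1, h2]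
    · rw [hdd]
      beta_reduce
      rw [if_neg h]
      have h1 : pB (qA ζ) ∉ DD B := (hnotDB _).mpr (hpB1 (qA ζ))
      rw [hee]
      beta_reduce
      rw [if_neg h1, hqpB]
      exact hpqA ζ ((hnotDA ζ).mp h)
  have hde : ∀ η, dd (ee η) = η := by
    intro η
    by_cases h : η ∈ DD B
    · obtain ⟨h1, h2⟩ := hED η h
      rw [hee]
      beta_reduce
      rw [if_pos h]
      rw [hdd]
      beta_reduce
      rw [if_pos h1, h2]
    · rw [hee]
      beta_reduce
      rw [if_neg h]
      have h1 : pA (qB η) ∉ DD A := (hnotDA _).mpr (hpA1 (qB η))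
      rw [hdd]
      beta_reduce
      rw [if_neg h1, hqpA]
      exact hpqB η ((hnotDB η).mp h)
  have hddcw : ∀ ζ (hc : ζ ∈ DD A), dd ζ = d0 ζ := by
    intro ζ hc
    rw [hdd]
    beta_reduce
    rw [if_pos hc]
  have heecw : ∀ η (hc : η ∈ DD B), ee η = e0 η := by
    intro η hc
    rw [hee]
    beta_reduce
    rw [if_pos hc]
  have hddtab : IsTable dd := by
    apply isTable_of_pieces (N := N)
    intro u hu
    by_cases h : app u zs ∈ DD A
    · obtain ⟨j, z, hz, hzval⟩ := pieceA u hu h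
      have he : dd ∘ cw u = (φ j z).val := by
        funext ξ
        have hmem : cw u ξ ∈ DD A := by
          rw [← hzval]
          exact mem_DD A hz ξ
        show dd (cw u ξ) = _
        rw [hddcw _ hmem, ← hzval]
        exact hd0 j z hz ξ
      rw [he]
      exact (φ j z).2
    · have hmemLA : u ∈ LA := (hLAmem u).mpr ⟨hu, h⟩
      have he : dd ∘ cw u = pB ∘ (qA ∘ cw u) := by
        funext ξ
        have hnmem : app u ξ ∉ DD A := by
          rw [hnotDA, firstn_app hu]
          exact hmemLA
        show dd (app u ξ) = pB (qA (app u ξ))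
        rw [hdd]
        beta_reduce
        rw [if_neg hnmem]
      rw [he]
      exact hpBtab.comp (hqAtab u hmemLA)
  have heetab : IsTable ee := by
    apply isTable_of_pieces (N := N)
    intro u hu
    by_cases h : app u zs ∈ DD B
    · obtain ⟨j, z, hz, hzval⟩ := pieceB u hu h
      have he : ee ∘ cw u = (ψ j z).val := by
        funext ξ
        have hmem : cw u ξ ∈ DD B := by
          rw [← hzval]
          exact mem_DD B hz ξ
        show ee (cw u ξ) = _
        rw [heecw _ hmem, ← hzval]
        exact he0 j z hz ξ
      rw [he]
      exact (ψ j z).2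
    · have hmemLB : u ∈ LB := (hLBmem u).mpr ⟨hu, h⟩
      have he : ee ∘ cw u = pA ∘ (qB ∘ cw u) := by
        funext ξ
        have hnmem : app u ξ ∉ DD B := by
          rw [hnotDB, firstn_app hu]
          exact hmemLB
        show ee (app u ξ) = pA (qB (app u ξ))
        rw [hee]
        beta_reduce
        rw [if_neg hnmem]
      rw [he]
      exact hpAtab.comp (hqBtab u hmemLB)
  refine ⟨{ toFun := fun f => ⟨dd ∘ f.val, hddtab.comp f.2⟩,
            invFun := fun f => ⟨ee ∘ f.val, heetab.comp f.2⟩,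
            left_inv := ?_, right_inv := ?_ }, ?_, ?_⟩
  · intro f
    apply Subtype.ext
    funext ξ
    exact hed (f.val ξ)
  · intro f
    apply Subtype.ext
    funext ξ
    exact hde (f.val ξ)
  · intro x y
    apply Subtype.ext
    exact comp_smu dd x.val y.val
  · intro j x hx
    apply Subtype.ext
    funext ξ
    show dd (x.val ξ) = (φ j x).val ξ
    rw [hddcw _ (mem_DD A hx ξ)]
    exact hd0 j x hx ξ

end CAx

/-- **Extension of isomorphisms on disjoint clones to a global automorphism**: given
pairwise disjoint clones `X j` (resp. `Y j`) whose unions generate proper subalgebras,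
and Cantor algebra isomorphisms `φ j : X j → Y j`, there is an automorphism
`v ∈ Aut(C)` with `v x = φ j x` for all `j` and `x ∈ X j`. -/
theorem extend_clone_isos {C : Type} (hC : CantorStr C) (c : C)
    (hfree : IsFreeCantorOn hC ![c]) (k : ℕ) (X Y : Fin k → Set C)
    (hX : ∀ j, IsClone hC (X j)) (hY : ∀ j, IsClone hC (Y j))
    (hXd : ∀ i j, i ≠ j → X i ∩ X j = ∅) (hYd : ∀ i j, i ≠ j → Y i ∩ Y j = ∅)
    (hXp : genCantorSubalgebra hC (⋃ j, X j) ≠ Set.univ)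
    (hYp : genCantorSubalgebra hC (⋃ j, Y j) ≠ Set.univ)
    (φ : Fin k → C → C) (hbij : ∀ j, Set.BijOn (φ j) (X j) (Y j))
    (hhom : ∀ j, ∀ x ∈ X j, ∀ y ∈ X j, φ j (hC.mu (x, y)) = hC.mu (φ j x, φ j y)) :
    ∃ v : ↥(cantorAut hC), ∀ j, ∀ x ∈ X j, (v : Equiv.Perm C) x = φ j x := by
  classical
  obtain ⟨h, hhomh, hbijh⟩ := CAx.free_to_TT hC c hfree
  set HE : C ≃ CAx.TT := Equiv.ofBijective h hbijh with hHE
  have hHEsymm : ∀ a, HE.symm (h a) = a := fun a => HE.symm_apply_apply a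
  have hHEsymm' : ∀ t, h (HE.symm t) = t := fun t => HE.apply_symm_apply t
  set A : Fin k → Set CAx.TT := fun j => h '' X j with hA
  set B : Fin k → Set CAx.TT := fun j => h '' Y j with hB
  set φ' : Fin k → CAx.TT → CAx.TT := fun j t => h (φ j (HE.symm t)) with hφ'
  have hsubA : ∀ j, IsCantorSubalgebra CAx.hT (A j) :=
    fun j => CAx.image_subalg hhomh (hX j).1
  have hsubB : ∀ j, IsCantorSubalgebra CAx.hT (B j) :=
    fun j => CAx.image_subalg hhomh (hY j).1
  have hfgA : ∀ j, ∃ F : Set CAx.TT, F.Finite ∧ A j = genCantorSubalgebra CAx.hT F := by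
    intro j
    obtain ⟨F, hFfin, hFgen⟩ := (hX j).2.2.2
    refine ⟨h '' F, hFfin.image h, ?_⟩
    show h '' X j = _
    rw [hFgen, CAx.image_gen hhomh]
  have hfgB : ∀ j, ∃ F : Set CAx.TT, F.Finite ∧ B j = genCantorSubalgebra CAx.hT F := by
    intro j
    obtain ⟨F, hFfin, hFgen⟩ := (hY j).2.2.2
    refine ⟨h '' F, hFfin.image h, ?_⟩
    show h '' Y j = _
    rw [hFgen, CAx.image_gen hhomh]
  have hdA : ∀ i j, i ≠ j → A i ∩ A j = ∅ := by
    intro i j hij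
    show h '' X i ∩ h '' X j = ∅
    rw [← Set.image_inter hbijh.1, hXd i j hij, Set.image_empty]
  have hdB : ∀ i j, i ≠ j → B i ∩ B j = ∅ := by
    intro i j hij
    show h '' Y i ∩ h '' Y j = ∅
    rw [← Set.image_inter hbijh.1, hYd i j hij, Set.image_empty]
  have himage_univ : ∀ S : Set C, h '' S = Set.univ → S = Set.univ := by
    intro S hc
    apply Set.eq_univ_of_forall
    intro a
    have : h a ∈ h '' S := by rw [hc]; trivial
    obtain ⟨b, hb, hba⟩ := this
    rwa [← hbijh.1 hba]
  have hpA : genCantorSubalgebra CAx.hT (⋃ j, A j) ≠ Set.univ := by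
    intro hc
    apply hXp
    have h1 : (⋃ j, A j) = h '' (⋃ j, X j) := by
      show (⋃ j, h '' X j) = _
      rw [Set.image_iUnion]
    rw [h1, ← CAx.image_gen hhomh] at hc
    exact himage_univ _ hc
  have hpB : genCantorSubalgebra CAx.hT (⋃ j, B j) ≠ Set.univ := by
    intro hc
    apply hYp
    have h1 : (⋃ j, B j) = h '' (⋃ j, Y j) := by
      show (⋃ j, h '' Y j) = _
      rw [Set.image_iUnion]
    rw [h1, ← CAx.image_gen hhomh] at hc
    exact himage_univ _ hc
  have hbij' : ∀ j, Set.BijOn (φ' j) (A j) (B j) := by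
    intro j
    refine ⟨?_, ?_, ?_⟩
    · rintro _ ⟨x, hx, rfl⟩
      show h (φ j (HE.symm (h x))) ∈ B j
      rw [hHEsymm]
      exact ⟨φ j x, (hbij j).mapsTo hx, rfl⟩
    · rintro _ ⟨x, hx, rfl⟩ _ ⟨x', hx', rfl⟩ heq
      have heq' : h (φ j x) = h (φ j x') := by
        have e1 : φ' j (h x) = h (φ j x) := by
          show h (φ j (HE.symm (h x))) = _
          rw [hHEsymm]
        have e2 : φ' j (h x') = h (φ j x') := by
          show h (φ j (HE.symm (h x'))) = _
          rw [hHEsymm]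
        rw [← e1, ← e2, heq]
      have := hbijh.1 heq'
      rw [(hbij j).injOn hx hx' this]
    · rintro _ ⟨y, hy, rfl⟩
      obtain ⟨x, hx, rfl⟩ := (hbij j).surjOn hy
      refine ⟨h x, ⟨x, hx, rfl⟩, ?_⟩
      show h (φ j (HE.symm (h x))) = h (φ j x)
      rw [hHEsymm]
  have hhom' : ∀ j, ∀ t ∈ A j, ∀ t' ∈ A j,
      φ' j (CAx.hT.mu (t, t')) = CAx.hT.mu (φ' j t, φ' j t') := by
    rintro j _ ⟨x, hx, rfl⟩ _ ⟨x', hx', rfl⟩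
    show h (φ j (HE.symm (CAx.hT.mu (h x, h x'))))
      = CAx.hT.mu (h (φ j (HE.symm (h x))), h (φ j (HE.symm (h x'))))
    rw [← hhomh x x', hHEsymm, hHEsymm, hHEsymm, hhom j x hx x' hx', hhomh]
  obtain ⟨v', hv'hom, hv'⟩ := CAx.concrete_main A B hsubA hsubB hfgA hfgB hdA hdB hpA hpB
    φ' hbij' hhom'
  set vC : Equiv.Perm C := (HE.trans v').trans HE.symm with hvC
  have hvCapp : ∀ a, vC a = HE.symm (v' (h a)) := fun a => rfl
  have hinvhom : IsCantorHom CAx.hT hC HE.symm := by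
    intro t t'
    apply hbijh.1
    rw [hHEsymm', hhomh, hHEsymm', hHEsymm']
  have hvChom : IsCantorHom hC hC ⇑vC := by
    intro x y
    rw [hvCapp (hC.mu (x, y)), hvCapp x, hvCapp y, hhomh x y, hv'hom (h x) (h y)]
    exact hinvhom _ _
  refine ⟨⟨vC, hvChom⟩, ?_⟩
  intro j x hx
  show vC x = φ j x
  rw [hvCapp, hv' j (h x) ⟨x, hx, rfl⟩]
  show HE.symm (h (φ j (HE.symm (h x)))) = φ j x
  rw [hHEsymm, hHEsymm]
end
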